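/- arXiv:2407.13015 — 5 statements merged into one kernel-verified Lean document; each statement's English description precedes it below -/
import Mathlib

section
/- Let f(z) = Σ a_n z^n be a power series with rational coefficients converging on the open ball B(0,ρ) ⊆ ℂ_p, where ρ ∈ (0,∞]. If α ∈ B(0,ρ) is algebraic over ℚ with [ℚ_p(α):ℚ_p] > 1 and f(α) is algebraic over ℚ, then for every α' algebraic over ℚ that is a ℚ_p-conjugate of α, f(α') is also algebraic over ℚ (indeed f(α') is an algebraic conjugate of f(α)). -/
open scoped ENNReal
open IntermediateField

set_option maxHeartbeats 1000000
set_option synthInstance.maxHeartbeats 100000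

/-- If `f` is a power series with rational coefficients converging on `B(0,ρ) ⊆ ℂ_p`,
`α ∈ B(0,ρ)` is algebraic over `ℚ` with `[ℚ_p(α):ℚ_p] > 1` and `f(α)` is algebraic over `ℚ`,
then for every `α'` algebraic over `ℚ` which is a `ℚ_p`-conjugate of `α`, the value `f(α')`
is algebraic over `ℚ` as well; indeed it is an algebraic conjugate of `f(α)`. -/
theorem exceptional_set_closed_under_qp_conjugation {p : ℕ} [Fact p.Prime]
    (Cp : Type) [NontriviallyNormedField Cp] [IsUltrametricDist Cp] [CompleteSpace Cp]
    [IsAlgClosed Cp] [CharZero Cp] [Algebra ℚ_[p] Cp]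
    (hisom : ∀ x : ℚ_[p], ‖algebraMap ℚ_[p] Cp x‖ = ‖x‖)
    (hdense : Dense {x : Cp | IsAlgebraic ℚ_[p] x})
    (ρ : ℝ≥0∞) (hρ : 0 < ρ) (a : ℕ → ℚ)
    (hconv : ∀ z : Cp, (‖z‖₊ : ℝ≥0∞) < ρ → Summable fun n => (a n : Cp) * z ^ n)
    (F : Cp → Cp) (hF : ∀ z : Cp, F z = ∑' n, (a n : Cp) * z ^ n)
    (α : Cp) (hαball : (‖α‖₊ : ℝ≥0∞) < ρ) (hαalg : IsAlgebraic ℚ α)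
    (hdeg : 1 < (minpoly ℚ_[p] α).natDegree)
    (hFα : IsAlgebraic ℚ (F α))
    (α' : Cp) (hα'alg : IsAlgebraic ℚ α')
    (hconj : minpoly ℚ_[p] α' = minpoly ℚ_[p] α) :
    IsAlgebraic ℚ (F α') ∧ minpoly ℚ (F α') = minpoly ℚ (F α) := by
  letI : NormedSpace ℚ_[p] Cp :=
    ⟨fun c x => le_of_eq (by rw [Algebra.smul_def, norm_mul, hisom])⟩
  letI : IsScalarTower ℚ ℚ_[p] Cp := IsScalarTower.of_algebraMap_eq (fun q => by
    rw [eq_ratCast (algebraMap ℚ Cp), eq_ratCast (algebraMap ℚ ℚ_[p]), map_ratCast])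
  have hint : IsIntegral ℚ_[p] α := (hαalg.tower_top ℚ_[p]).isIntegral
  set E := ℚ_[p]⟮α⟯ with hE
  haveI : FiniteDimensional ℚ_[p] E := IntermediateField.adjoin.finiteDimensional hint
  haveI : CharZero E := charZero_of_injective_algebraMap (algebraMap ℚ_[p] E).injective
  letI : NormedSpace ℚ_[p] E := ⟨fun c x => by
    rw [Algebra.smul_def]
    have h1 : ‖algebraMap ℚ_[p] E c * x‖ = ‖((algebraMap ℚ_[p] E c * x : E) : Cp)‖ := rfl
    have h2 : ((algebraMap ℚ_[p] E c : E) : Cp) = algebraMap ℚ_[p] Cp c := rfl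
    rw [h1, MulMemClass.coe_mul, norm_mul, h2, hisom]
    exact le_rfl⟩
  set x0 : E := IntermediateField.AdjoinSimple.gen ℚ_[p] α with hx0
  have hroot : Polynomial.aeval α' (minpoly ℚ_[p] α) = 0 := hconj ▸ minpoly.aeval ℚ_[p] α'
  set σ : E →ₐ[ℚ_[p]] Cp :=
    (AdjoinRoot.liftAlgHom _ (Algebra.ofId ℚ_[p] Cp) α' hroot).comp
      (IntermediateField.adjoinRootEquivAdjoin ℚ_[p] hint).symm.toAlgHom with hσ
  have hσx0 : σ x0 = α' := by
    rw [hσ, AlgHom.comp_apply]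
    have : (IntermediateField.adjoinRootEquivAdjoin ℚ_[p] hint).symm x0 =
        AdjoinRoot.root (minpoly ℚ_[p] α) := by
      rw [AlgEquiv.symm_apply_eq, IntermediateField.adjoinRootEquivAdjoin_apply_root]
    rw [AlgEquiv.coe_algHom, this]; exact AdjoinRoot.liftAlgHom_root _ _ _ _
  have σcont : Continuous σ := σ.toLinearMap.continuous_of_finiteDimensional
  -- norm bound
  have key : ∀ y : E, ‖σ y‖ ≤ ‖y‖ := by
    intro y
    set σL : E →L[ℚ_[p]] Cp := ⟨σ.toLinearMap, σcont⟩ with hσL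
    set C : ℝ := max ‖σL‖ 1 with hC
    rcases eq_or_ne y 0 with rfl | hy
    · simp
    by_contra h
    push_neg at h
    have hy0 : (0 : ℝ) < ‖y‖ := by
      have : ((y : Cp)) ≠ 0 := fun hc => hy (Subtype.ext hc)
      simpa using norm_pos_iff.mpr this
    have hr1 : 1 < ‖σ y‖ / ‖y‖ := (one_lt_div hy0).mpr h
    obtain ⟨n, hn⟩ := pow_unbounded_of_one_lt C hr1
    have hb : ‖σ y‖ ^ n ≤ C * ‖y‖ ^ n := by
      have h1 : ‖σ (y ^ n)‖ ≤ ‖σL‖ * ‖y ^ n‖ := σL.le_opNorm _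
      have h2 : ‖σ (y ^ n)‖ = ‖σ y‖ ^ n := by rw [map_pow, norm_pow]
      have h3 : ‖y ^ n‖ = ‖y‖ ^ n := by
        change ‖((y ^ n : E) : Cp)‖ = ‖(y : Cp)‖ ^ n
        push_cast
        rw [norm_pow]
      have h4 : ‖σL‖ * ‖y ^ n‖ ≤ C * ‖y‖ ^ n := by
        rw [h3]
        exact mul_le_mul_of_nonneg_right (le_max_left _ _) (pow_nonneg (norm_nonneg _) n)
      calc ‖σ y‖ ^ n = ‖σ (y ^ n)‖ := h2.symm
        _ ≤ ‖σL‖ * ‖y ^ n‖ := h1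
        _ ≤ C * ‖y‖ ^ n := h4
    have : (‖σ y‖ / ‖y‖) ^ n ≤ C := by
      rw [div_pow, div_le_iff₀ (pow_pos hy0 n)]
      linarith [hb]
    linarith
  -- α' in the ball
  have hα'norm : ‖α'‖ ≤ ‖α‖ := by
    have h1 : ‖σ x0‖ ≤ ‖x0‖ := key x0
    have h2 : ‖x0‖ = ‖α‖ := rfl
    rw [hσx0] at h1; rw [← h2]; exact h1
  have hα'ball : (‖α'‖₊ : ℝ≥0∞) < ρ := by
    refine lt_of_le_of_lt ?_ hαball
    exact_mod_cast ENNReal.coe_le_coe.mpr (by exact_mod_cast hα'norm)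
  -- the series in E
  have hsummα := hconv α hαball
  have hsα : HasSum (fun n => (a n : Cp) * α ^ n) (F α) := by
    rw [hF α]; exact hsummα.hasSum
  set g : ℕ → E := fun n => (a n : E) * x0 ^ n with hg
  have hcoe_g : ∀ n, ((g n : E) : Cp) = (a n : Cp) * α ^ n := by
    intro n
    have : ((g n : E) : Cp) = E.val (g n) := rfl
    rw [this, hg, map_mul, map_pow, map_ratCast]
    rfl
  have hFαE : F α ∈ E := by
    haveI : Module.Finite ℚ_[p] (Subalgebra.toSubmodule E.toSubalgebra) :=
      ‹FiniteDimensional ℚ_[p] E›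
    have hclosed : IsClosed (E : Set Cp) :=
      Submodule.closed_of_finiteDimensional (Subalgebra.toSubmodule E.toSubalgebra)
    refine hclosed.mem_of_tendsto hsα (Filter.Eventually.of_forall fun s => ?_)
    rw [SetLike.mem_coe]
    refine sum_mem fun n _ => ?_
    have h1 : (a n : Cp) ∈ E := by
      rw [← map_ratCast (algebraMap ℚ_[p] Cp) (a n)]
      exact E.algebraMap_mem _
    exact mul_mem h1 (pow_mem (IntermediateField.mem_adjoin_simple_self ℚ_[p] α) n)
  set x : E := ⟨F α, hFαE⟩ with hx
  have hind : Topology.IsInducing ((E.val : E →+* Cp) : E → Cp) :=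
    Topology.IsInducing.subtypeVal
  have hgsum : HasSum g x := by
    rw [← hind.hasSum_iff (g := (E.val : E →+* Cp))]
    have : ((E.val : E →+* Cp) : E → Cp) ∘ g = fun n => (a n : Cp) * α ^ n :=
      funext fun n => hcoe_g n
    rw [this]
    exact hsα
  have hsum' : HasSum (fun n => σ (g n)) (σ x) := hgsum.map σ σcont
  have hσg : ∀ n, σ (g n) = (a n : Cp) * α' ^ n := by
    intro n; rw [hg]; simp only [map_mul, map_pow, hσx0, map_ratCast]
  have hFα' : F α' = σ x := by
    rw [hF α']
    have : HasSum (fun n => (a n : Cp) * α' ^ n) (σ x) := by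
      simpa only [hσg] using hsum'
    exact this.tsum_eq
  -- conclude
  set ψ1 : E →ₐ[ℚ] Cp := (E.val : E →+* Cp).toRatAlgHom with hψ1
  have hψ1inj : Function.Injective ψ1 := Subtype.val_injective
  set ψ2 : E →ₐ[ℚ] Cp := (σ : E →+* Cp).toRatAlgHom with hψ2
  have hψ2inj : Function.Injective ψ2 := (σ : E →+* Cp).injective
  have hψ1x : ψ1 x = F α := rfl
  have hψ2x : ψ2 x = σ x := rfl
  have hxalg : IsAlgebraic ℚ x := by
    rw [← isAlgebraic_algHom_iff ψ1 hψ1inj, hψ1x]; exact hFα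
  constructor
  · rw [hFα', ← hψ2x]; exact hxalg.algHom ψ2
  · rw [hFα', ← hψ2x, minpoly.algHom_eq ψ2 hψ2inj, ← hψ1x, minpoly.algHom_eq ψ1 hψ1inj]
end

section
/- Let 𝕂 be a subfield of ℂ_p and let f ∈ 𝕂[[z]] be a power series with radius of convergence ρ ∈ (0,∞] that is algebraic of degree n over ℂ_p[z] (i.e., n is the minimal total degree of a nonzero polynomial P(X,Y) ∈ ℂ_p[X,Y] with P(z, f(z)) = 0 for all z ∈ B(0,ρ)). Then f is algebraic of degree n over 𝕂[z]: there exists a nonzero polynomial P̄(X,Y) ∈ 𝕂[X,Y] of total degree n with P̄(z, f(z)) = 0 for all z ∈ B(0,ρ). -/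
open scoped ENNReal

section Aux

open Finset in
lemma exists_subfield_solution {K L : Type*} [Field K] [Field L] (φ : K →+* L)
    {ι : Type*} [Fintype ι] [DecidableEq ι] (A : ℕ → ι → K) (x : ι → L) (hx : x ≠ 0)
    (hAx : ∀ m, ∑ i, φ (A m i) * x i = 0) :
    ∃ y : ι → K, y ≠ 0 ∧ ∀ m, ∑ i, A m i * y i = 0 := by
  classical
  obtain ⟨s, hs_sub, hs_span, hs_li⟩ := exists_linearIndependent K (Set.range A)
  haveI : Fintype s := (hs_li.setFinite).fintype
  set d := Fintype.card ι with hd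
  set r := Fintype.card s with hrr
  have hr_le : r ≤ d := by
    simpa only [Module.finrank_fintype_fun_eq_card] using hs_li.fintype_card_le_finrank
  by_cases hrd : r = d
  · exfalso
    have hcard : Fintype.card ι = Fintype.card s := (hrd).symm
    let e : ι ≃ s := Fintype.equivOfCardEq hcard
    let N : Matrix ι ι K := fun i j => (e i : ι → K) j
    have hrows : LinearIndependent K (fun i : ι => (N i : ι → K)) :=
      hs_li.comp e e.injective
    have hdet : N.det ≠ 0 := by
      intro h0
      obtain ⟨v, hv0, hvN⟩ := Matrix.exists_vecMul_eq_zero_iff.mpr h0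
      refine hv0 ?_
      have := Fintype.linearIndependent_iff.mp hrows v ?_
      · funext i; exact this i
      · funext j
        have h2 : (Matrix.vecMul v N) j = 0 := by rw [hvN]; rfl
        simpa [Matrix.vecMul, dotProduct, Finset.sum_apply] using h2
    have hdetL : (N.map φ).det ≠ 0 := fun h =>
      hdet (φ.injective (by rw [RingHom.map_det, RingHom.mapMatrix_apply, h, map_zero]))
    have hexist : ∃ v, v ≠ 0 ∧ (N.map φ).mulVec v = 0 := by
      refine ⟨x, hx, ?_⟩
      funext i
      obtain ⟨m, hm⟩ := hs_sub (e i).2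
      have hNA : ∀ j, N i j = A m j := fun j => (congrFun hm j).symm
      simp only [Matrix.mulVec, dotProduct, Matrix.map_apply, hNA]
      exact hAx m
    exact hdetL (Matrix.exists_mulVec_eq_zero_iff.mp hexist)
  · have hlt : r < d := lt_of_le_of_ne hr_le hrd
    let e2 : Fin d ≃ ι := (Fintype.equivFin ι).symm
    let es : Fin r ≃ s := (Fintype.equivFin s).symm
    let M : Matrix (Fin d) (Fin d) K :=
      fun i j => if h : (i : ℕ) < r then (es ⟨i, h⟩ : ι → K) (e2 j) else 0
    have hdet : M.det = 0 := by
      apply Matrix.det_eq_zero_of_row_eq_zero ⟨r, hlt⟩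
      intro j; simp [M]
    obtain ⟨v, hv0, hvM⟩ := Matrix.exists_mulVec_eq_zero_iff.mpr hdet
    set y : ι → K := fun j => v (e2.symm j) with hy
    have hy0 : y ≠ 0 := by
      intro h
      apply hv0; funext i
      have := congrFun h (e2 i)
      simpa [hy] using this
    have hsy : ∀ w ∈ s, ∑ j, w j * y j = 0 := by
      intro w hw
      set i : Fin r := es.symm ⟨w, hw⟩ with hi
      set i' : Fin d := ⟨(i : ℕ), lt_of_lt_of_le i.2 hr_le⟩ with hi'
      have hesi : ((es i : s) : ι → K) = w := by rw [hi, Equiv.apply_symm_apply]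
      have hterm : ∀ j, M i' j = w (e2 j) := by
        intro j
        show (if h : ((i' : Fin d) : ℕ) < r then ((es ⟨(i' : ℕ), h⟩ : s) : ι → K) (e2 j)
          else 0) = _
        rw [dif_pos (show ((i' : Fin d) : ℕ) < r from i.2)]
        rw [show (⟨(i' : ℕ), i.2⟩ : Fin r) = i from rfl, hesi]
      have hrow : M.mulVec v i' = 0 := by rw [hvM]; rfl
      calc ∑ j : ι, w j * y j = ∑ j : Fin d, w (e2 j) * y (e2 j) :=
            (Equiv.sum_comp e2 (fun j => w j * y j)).symm
        _ = ∑ j : Fin d, M i' j * v j := by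
            apply Finset.sum_congr rfl
            intro j _
            rw [hterm j, hy]
            simp
        _ = 0 := by rw [← hrow]; simp [Matrix.mulVec, dotProduct]
    let ψ : (ι → K) →ₗ[K] K :=
      { toFun := fun w => ∑ j, w j * y j
        map_add' := by intro w1 w2; simp [add_mul, Finset.sum_add_distrib]
        map_smul' := by intro c w; simp [Finset.mul_sum, mul_assoc]
        }
    have hker : Submodule.span K (Set.range A) ≤ LinearMap.ker ψ := by
      rw [← hs_span, Submodule.span_le]
      intro w hw
      exact hsy w hw
    refine ⟨y, hy0, fun m => ?_⟩
    have := hker (Submodule.subset_span ⟨m, rfl⟩)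
    simpa [ψ] using this


open scoped ENNReal
open Filter PowerSeries

variable {Cp : Type} [NontriviallyNormedField Cp] [IsUltrametricDist Cp] [CompleteSpace Cp]

lemma summable_mul_pair {u v : ℕ → Cp} (hu : Summable u) (hv : Summable v) :
    Summable (fun x : ℕ × ℕ => u x.1 * v x.2) := by
  apply NonarchimedeanAddGroup.summable_of_tendsto_cofinite_zero
  obtain ⟨Cu, hCu⟩ := (hu.tendsto_cofinite_zero.norm.bddAbove_range_of_cofinite).imp
    (fun C hC => fun i => hC (Set.mem_range_self i))
  obtain ⟨Cv, hCv⟩ := (hv.tendsto_cofinite_zero.norm.bddAbove_range_of_cofinite).imp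
    (fun C hC => fun i => hC (Set.mem_range_self i))
  have hCu1 : ∀ i, ‖u i‖ ≤ max Cu 1 := fun i => (hCu i).trans (le_max_left _ _)
  have hCv1 : ∀ i, ‖v i‖ ≤ max Cv 1 := fun i => (hCv i).trans (le_max_left _ _)
  have hCu0 : (0:ℝ) < max Cu 1 := lt_of_lt_of_le one_pos (le_max_right _ _)
  have hCv0 : (0:ℝ) < max Cv 1 := lt_of_lt_of_le one_pos (le_max_right _ _)
  rw [Metric.tendsto_nhds]
  intro ε hε
  rw [Filter.eventually_cofinite]
  have h1 : {k : ℕ | ¬ ‖u k‖ < ε / max Cv 1}.Finite := by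
    have := hu.tendsto_cofinite_zero
    rw [Metric.tendsto_nhds] at this
    simpa [dist_zero_right] using
      Filter.eventually_cofinite.mp (this (ε / max Cv 1) (div_pos hε hCv0))
  have h2 : {l : ℕ | ¬ ‖v l‖ < ε / max Cu 1}.Finite := by
    have := hv.tendsto_cofinite_zero
    rw [Metric.tendsto_nhds] at this
    simpa [dist_zero_right] using
      Filter.eventually_cofinite.mp (this (ε / max Cu 1) (div_pos hε hCu0))
  apply Set.Finite.subset (h1.prod h2)
  intro x hx
  simp only [Set.mem_setOf_eq, dist_zero_right] at hx
  constructor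
  · simp only [Set.mem_setOf_eq]
    intro hlt
    apply hx
    calc ‖u x.1 * v x.2‖ ≤ ‖u x.1‖ * ‖v x.2‖ := norm_mul_le _ _
      _ ≤ ‖u x.1‖ * max Cv 1 := mul_le_mul_of_nonneg_left (hCv1 _) (norm_nonneg _)
      _ < (ε / max Cv 1) * max Cv 1 := mul_lt_mul_of_pos_right hlt hCv0
      _ = ε := div_mul_cancel₀ ε (ne_of_gt hCv0)
  · simp only [Set.mem_setOf_eq]
    intro hlt
    apply hx
    calc ‖u x.1 * v x.2‖ ≤ ‖u x.1‖ * ‖v x.2‖ := norm_mul_le _ _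
      _ ≤ (max Cu 1) * ‖v x.2‖ := mul_le_mul_of_nonneg_right (hCu1 _) (norm_nonneg _)
      _ < (max Cu 1) * (ε / max Cu 1) := mul_lt_mul_of_pos_left hlt hCu0
      _ = ε := mul_div_cancel₀ ε (ne_of_gt hCu0)

set_option maxHeartbeats 1000000 in
lemma hasSum_coeff_mul {g h : PowerSeries Cp} {G H z : Cp}
    (hg : HasSum (fun m => coeff m g * z ^ m) G)
    (hh : HasSum (fun m => coeff m h * z ^ m) H) :
    HasSum (fun m => coeff m (g * h) * z ^ m) (G * H) := by
  have hsum : Summable (fun x : ℕ × ℕ =>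
      (coeff x.1 g * z ^ x.1) * (coeff x.2 h * z ^ x.2)) :=
    summable_mul_pair (u := fun k => coeff k g * z ^ k)
      (v := fun k => coeff k h * z ^ k) hg.summable hh.summable
  have hprod := hg.mul hh hsum
  have hsig := (Finset.HasAntidiagonal.sigmaAntidiagonalEquivProd.hasSum_iff).mpr hprod
  have hfib : ∀ m : ℕ, HasSum
      (fun kl : (Finset.HasAntidiagonal.antidiagonal m : Finset (ℕ × ℕ)) =>
        (coeff (kl : ℕ × ℕ).1 g * z ^ (kl : ℕ × ℕ).1) *
          (coeff (kl : ℕ × ℕ).2 h * z ^ (kl : ℕ × ℕ).2))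
      (coeff m (g * h) * z ^ m) := by
    intro m
    have := hasSum_fintype (fun kl : (Finset.HasAntidiagonal.antidiagonal m : Finset (ℕ × ℕ)) =>
      (coeff (kl : ℕ × ℕ).1 g * z ^ (kl : ℕ × ℕ).1) *
        (coeff (kl : ℕ × ℕ).2 h * z ^ (kl : ℕ × ℕ).2))
    convert this using 1
    rw [Finset.sum_coe_sort (Finset.HasAntidiagonal.antidiagonal m)
      (fun kl : ℕ × ℕ => (coeff kl.1 g * z ^ kl.1) * (coeff kl.2 h * z ^ kl.2))]
    rw [PowerSeries.coeff_mul, Finset.sum_mul]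
    apply Finset.sum_congr rfl
    intro kl hkl
    have : kl.1 + kl.2 = m := Finset.HasAntidiagonal.mem_antidiagonal.mp hkl
    rw [← this, pow_add]
    ring
  exact hsig.sigma hfib

lemma coeffs_eq_zero {ρ : ℝ≥0∞}
    (hsmall : ∀ ε : ℝ, 0 < ε → ∃ t : Cp, t ≠ 0 ∧ ‖t‖ < ε ∧ ‖t‖ ≤ 1) (hρ : 0 < ρ)
    {b : ℕ → Cp} (hb : ∀ z : Cp, (‖z‖₊ : ℝ≥0∞) < ρ → HasSum (fun m => b m * z ^ m) 0) :
    ∀ m, b m = 0 := by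
  by_contra hcon
  push_neg at hcon
  obtain ⟨m₁, hm₁⟩ := hcon
  have hex : ∃ m, b m ≠ 0 := ⟨m₁, hm₁⟩
  classical
  set m₀ := Nat.find hex with hm₀
  have hbm₀ : b m₀ ≠ 0 := Nat.find_spec hex
  have hmin : ∀ k < m₀, b k = 0 := fun k hk => by
    by_contra hne; exact Nat.find_min hex hk hne
  -- choose z₀
  obtain ⟨r, hr0, hrρ⟩ := ENNReal.lt_iff_exists_nnreal_btwn.mp hρ
  have hr0' : (0:ℝ) < r := by exact_mod_cast hr0
  obtain ⟨z₀, hz₀ne, hz₀lt, -⟩ := hsmall r hr0'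
  have hz₀ball : (‖z₀‖₊ : ℝ≥0∞) < ρ := by
    refine lt_trans ?_ hrρ
    exact_mod_cast (show ‖z₀‖₊ < r from hz₀lt)
  have hz₀pos : (0:ℝ) < ‖z₀‖ := norm_pos_iff.mpr hz₀ne
  -- bound C
  have hsum₀ := (hb z₀ hz₀ball).summable
  obtain ⟨C₀, hC₀⟩ := (hsum₀.tendsto_cofinite_zero.norm.bddAbove_range_of_cofinite).imp
    (fun C hC => fun i => hC (Set.mem_range_self i))
  set C := max C₀ 1 with hC
  have hCpos : (0:ℝ) < C := lt_of_lt_of_le one_pos (le_max_right _ _)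
  have hCb : ∀ j, ‖b j * z₀ ^ j‖ ≤ C := fun j => (hC₀ j).trans (le_max_left _ _)
  -- choose t
  set ε := (‖b m₀‖ * ‖z₀‖ ^ m₀) / C with hε
  have hεpos : 0 < ε := by
    apply div_pos _ hCpos
    exact mul_pos (norm_pos_iff.mpr hbm₀) (pow_pos hz₀pos _)
  obtain ⟨t, htne, htlt, htle⟩ := hsmall ε hεpos
  have htpos : (0:ℝ) < ‖t‖ := norm_pos_iff.mpr htne
  set z := z₀ * t with hzdef
  have hzball : (‖z‖₊ : ℝ≥0∞) < ρ := by
    have : ‖z‖₊ ≤ ‖z₀‖₊ := by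
      rw [hzdef, nnnorm_mul]
      calc ‖z₀‖₊ * ‖t‖₊ ≤ ‖z₀‖₊ * 1 := by
            apply mul_le_mul_of_nonneg_left _ (by positivity)
            exact_mod_cast htle
        _ = ‖z₀‖₊ := mul_one _
    exact lt_of_le_of_lt (by exact_mod_cast this) hz₀ball
  have hz := hb z hzball
  have hzsum := hz.summable
  -- split the sum
  have hsplit := Summable.sum_add_tsum_nat_add (f := fun m => b m * z ^ m) (m₀ + 1) hzsum
  rw [hz.tsum_eq] at hsplit
  have hhead : ∑ i ∈ Finset.range (m₀ + 1), b i * z ^ i = b m₀ * z ^ m₀ := by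
    rw [Finset.sum_eq_single m₀]
    · intro k hk hkne
      have : k < m₀ := lt_of_le_of_ne (Nat.lt_succ_iff.mp (Finset.mem_range.mp hk)) hkne
      rw [hmin k this, zero_mul]
    · intro h; exact absurd (Finset.self_mem_range_succ m₀) h
  rw [hhead] at hsplit
  -- tail bound
  set T := ∑' k, b (k + (m₀ + 1)) * z ^ (k + (m₀ + 1)) with hT
  have hTnorm : ‖T‖ ≤ C * ‖t‖ ^ (m₀ + 1) := by
    apply IsUltrametricDist.norm_tsum_le_of_forall_le_of_nonneg
    · positivity
    · intro k
      have : ‖b (k + (m₀ + 1)) * z ^ (k + (m₀ + 1))‖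
          = ‖b (k + (m₀ + 1)) * z₀ ^ (k + (m₀ + 1))‖ * ‖t‖ ^ (k + (m₀ + 1)) := by
        rw [hzdef, mul_pow, norm_mul, norm_mul, norm_mul, norm_pow, norm_pow]
        ring
      rw [this]
      calc ‖b (k + (m₀ + 1)) * z₀ ^ (k + (m₀ + 1))‖ * ‖t‖ ^ (k + (m₀ + 1))
          ≤ C * ‖t‖ ^ (k + (m₀ + 1)) := by
            apply mul_le_mul_of_nonneg_right (hCb _) (by positivity)
        _ ≤ C * ‖t‖ ^ (m₀ + 1) := by
            apply mul_le_mul_of_nonneg_left _ (le_of_lt hCpos)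
            apply pow_le_pow_of_le_one (le_of_lt htpos) htle
            omega
  have hTlt : ‖T‖ < ‖b m₀ * z ^ m₀‖ := by
    have h1 : ‖b m₀ * z ^ m₀‖ = (‖b m₀‖ * ‖z₀‖ ^ m₀) * ‖t‖ ^ m₀ := by
      rw [hzdef, mul_pow, norm_mul, norm_mul, norm_pow, norm_pow]; ring
    have hkey : C * ‖t‖ < ‖b m₀‖ * ‖z₀‖ ^ m₀ := (lt_div_iff₀' hCpos).mp htlt
    have h2 : C * ‖t‖ ^ (m₀ + 1) < (‖b m₀‖ * ‖z₀‖ ^ m₀) * ‖t‖ ^ m₀ := by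
      calc C * ‖t‖ ^ (m₀ + 1) = (C * ‖t‖) * ‖t‖ ^ m₀ := by ring
        _ < _ := mul_lt_mul_of_pos_right hkey (pow_pos htpos m₀)
    rw [h1]
    exact lt_of_le_of_lt hTnorm h2
  -- contradiction
  have heq : b m₀ * z ^ m₀ = -T := eq_neg_of_add_eq_zero_left hsplit
  have := congrArg norm heq
  rw [norm_neg] at this
  rw [this] at hTlt
  exact lt_irrefl _ hTlt

lemma hasSum_aeval {ρ : ℝ≥0∞} (a : ℕ → Cp)
    (hconv : ∀ z : Cp, (‖z‖₊ : ℝ≥0∞) < ρ → Summable fun n => a n * z ^ n)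
    (F : Cp → Cp) (hF : ∀ z : Cp, F z = ∑' n, a n * z ^ n)
    (Q : MvPolynomial (Fin 2) Cp) (z : Cp) (hz : (‖z‖₊ : ℝ≥0∞) < ρ) :
    HasSum (fun m => coeff m (MvPolynomial.aeval ![PowerSeries.X, PowerSeries.mk a] Q) * z ^ m)
      (MvPolynomial.eval ![z, F z] Q) := by
  induction Q using MvPolynomial.induction_on with
  | C c =>
      have h1 : ∀ m, coeff m (MvPolynomial.aeval
          ![PowerSeries.X, PowerSeries.mk a] (MvPolynomial.C c)) * z ^ m
          = (if m = 0 then c * z ^ m else 0) := by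
        intro m
        rw [MvPolynomial.aeval_C]
        rw [PowerSeries.algebraMap_apply, Algebra.algebraMap_self, RingHom.id_apply,
          PowerSeries.coeff_C]
        split <;> simp_all
      rw [show (MvPolynomial.eval ![z, F z] (MvPolynomial.C c)) = c from MvPolynomial.eval_C c]
      have h2 : HasSum (fun m => if m = 0 then c * z ^ m else 0) c := by
        have := hasSum_single (f := fun m => if m = 0 then c * z ^ m else 0) 0
          (fun m hm => if_neg hm)
        simpa using this
      exact (funext h1 : _) ▸ h2
  | add p q ihp ihq =>
      simpa only [map_add, add_mul] using ihp.add ihq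
  | mul_X p i ih =>
      have hcomp : HasSum (fun m => coeff m (![PowerSeries.X, PowerSeries.mk a] i) * z ^ m)
          (![z, F z] i) := by
        fin_cases i
        · simp only [Matrix.cons_val_zero]
          have h2 := hasSum_single (f := fun m => coeff m (PowerSeries.X : PowerSeries Cp) * z ^ m) 1
            (fun m hm => by simp [PowerSeries.coeff_X, hm])
          simpa [PowerSeries.coeff_X] using h2
        · simp only [Matrix.cons_val_one, Matrix.head_cons]
          have h3 : HasSum (fun m => a m * z ^ m) (F z) := by
            rw [hF z]
            exact (hconv z hz).hasSum
          simpa [PowerSeries.coeff_mk] using h3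
      simp only [map_mul, MvPolynomial.aeval_X, MvPolynomial.eval_X]
      exact hasSum_coeff_mul ih hcomp


open PowerSeries

noncomputable def monoFn (i j : ℕ) : Fin 2 →₀ ℕ := Finsupp.single 0 i + Finsupp.single 1 j

lemma monoFn_apply0 (i j : ℕ) : monoFn i j 0 = i := by
  simp [monoFn, Finsupp.single_apply]

lemma monoFn_apply1 (i j : ℕ) : monoFn i j 1 = j := by
  simp [monoFn, Finsupp.single_apply]

lemma monoFn_eq_self (d : Fin 2 →₀ ℕ) : monoFn (d 0) (d 1) = d := by
  ext i
  fin_cases i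
  · simpa using monoFn_apply0 (d 0) (d 1)
  · simpa using monoFn_apply1 (d 0) (d 1)

lemma finsupp_sum_eq (d : Fin 2 →₀ ℕ) : (d.sum fun _ e => e) = d 0 + d 1 := by
  rw [Finsupp.sum_fintype _ _ (fun _ => rfl), Fin.sum_univ_two]

lemma monoFn_sum (i j : ℕ) : ((monoFn i j).sum fun _ e => e) = i + j := by
  rw [finsupp_sum_eq, monoFn_apply0, monoFn_apply1]

abbrev idxSet (n : ℕ) := {ij : Fin (n + 1) × Fin (n + 1) // (ij.1 : ℕ) + (ij.2 : ℕ) ≤ n}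

noncomputable def Qb {R : Type*} [CommRing R] (n : ℕ) (y : idxSet n → R) :
    MvPolynomial (Fin 2) R :=
  ∑ ij : idxSet n, MvPolynomial.monomial (monoFn ij.1.1 ij.1.2) (y ij)

lemma coeff_Qb {R : Type*} [CommRing R] (n : ℕ) (y : idxSet n → R) (d : Fin 2 →₀ ℕ) :
    (Qb n y).coeff d = ∑ ij : idxSet n, if monoFn ij.1.1 ij.1.2 = d then y ij else 0 := by
  rw [Qb, MvPolynomial.coeff_sum]
  exact Finset.sum_congr rfl fun ij _ => MvPolynomial.coeff_monomial d _ (y ij)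

lemma monoFn_idx_inj {n : ℕ} (ij ij' : idxSet n)
    (h : monoFn ij.1.1 ij.1.2 = monoFn ij'.1.1 ij'.1.2) : ij = ij' := by
  have h0 : (ij.1.1 : ℕ) = ij'.1.1 := by
    rw [← monoFn_apply0 (ij.1.1 : ℕ) ij.1.2, h, monoFn_apply0]
  have h1 : (ij.1.2 : ℕ) = ij'.1.2 := by
    rw [← monoFn_apply1 (ij.1.1 : ℕ) ij.1.2, h, monoFn_apply1]
  exact Subtype.ext (Prod.ext (Fin.ext h0) (Fin.ext h1))

lemma coeff_Qb_mono {R : Type*} [CommRing R] (n : ℕ) (y : idxSet n → R) (ij₀ : idxSet n) :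
    (Qb n y).coeff (monoFn ij₀.1.1 ij₀.1.2) = y ij₀ := by
  rw [coeff_Qb, Finset.sum_eq_single ij₀]
  · rw [if_pos rfl]
  · intro ij _ hne
    rw [if_neg (fun h => hne (monoFn_idx_inj ij ij₀ h))]
  · intro h; exact absurd (Finset.mem_univ ij₀) h

lemma totalDegree_Qb {R : Type*} [CommRing R] (n : ℕ) (y : idxSet n → R) :
    (Qb n y).totalDegree ≤ n := by
  refine le_trans (MvPolynomial.totalDegree_finset_sum _ _) ?_
  apply Finset.sup_le
  intro ij _
  refine le_trans (MvPolynomial.totalDegree_monomial_le _ _) ?_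
  show ((monoFn (ij.1.1 : ℕ) (ij.1.2 : ℕ)).sum fun _ e => e) ≤ n
  rw [monoFn_sum]
  exact ij.2

lemma Qb_eq_of {R : Type*} [CommRing R] {n : ℕ} (P : MvPolynomial (Fin 2) R)
    (hdeg : P.totalDegree ≤ n) :
    P = Qb n (fun ij => P.coeff (monoFn ij.1.1 ij.1.2)) := by
  apply MvPolynomial.ext
  intro d
  rw [coeff_Qb]
  by_cases hd : d 0 + d 1 ≤ n
  · have hd0 : d 0 ≤ n := le_trans (Nat.le_add_right _ _) hd
    have hd1 : d 1 ≤ n := le_trans (Nat.le_add_left _ _) hd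
    set ij₀ : idxSet n :=
      ⟨(⟨d 0, Nat.lt_succ_of_le hd0⟩, ⟨d 1, Nat.lt_succ_of_le hd1⟩), hd⟩ with hij₀
    have hmono : monoFn (ij₀.1.1 : ℕ) (ij₀.1.2 : ℕ) = d := by
      rw [hij₀]; exact monoFn_eq_self d
    rw [Finset.sum_eq_single ij₀]
    · rw [if_pos hmono, hmono]
    · intro ij _ hne
      rw [if_neg]
      intro h
      exact hne (monoFn_idx_inj ij ij₀ (h.trans hmono.symm))
    · intro h; exact absurd (Finset.mem_univ ij₀) h
  · have hleft : P.coeff d = 0 := by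
      by_contra h
      have hd' := MvPolynomial.le_totalDegree (p := P) (MvPolynomial.mem_support_iff.mpr h)
      rw [finsupp_sum_eq] at hd'
      exact hd (le_trans hd' hdeg)
    rw [hleft]
    symm
    apply Finset.sum_eq_zero
    intro ij _
    rw [if_neg]
    intro h
    apply hd
    have h0 : d 0 = (ij.1.1 : ℕ) := by rw [← h, monoFn_apply0]
    have h1 : d 1 = (ij.1.2 : ℕ) := by rw [← h, monoFn_apply1]
    rw [h0, h1]
    exact ij.2

lemma monomial_monoFn_eq {R : Type*} [CommRing R] (i j : ℕ) (c : R) :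
    (MvPolynomial.monomial (monoFn i j) c : MvPolynomial (Fin 2) R)
      = MvPolynomial.C c * MvPolynomial.X 0 ^ i * MvPolynomial.X 1 ^ j := by
  rw [MvPolynomial.X_pow_eq_monomial, MvPolynomial.X_pow_eq_monomial,
    MvPolynomial.C_mul_monomial, MvPolynomial.monomial_mul]
  simp [monoFn]

lemma coeff_aeval_Qb {R : Type*} [CommRing R] {n : ℕ} (y : idxSet n → R)
    (f : PowerSeries R) (m : ℕ) :
    coeff m (MvPolynomial.aeval ![PowerSeries.X, f] (Qb n y))
      = ∑ ij : idxSet n,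
          y ij * coeff m (PowerSeries.X ^ (ij.1.1 : ℕ) * f ^ (ij.1.2 : ℕ)) := by
  rw [Qb, map_sum, map_sum]
  apply Finset.sum_congr rfl
  intro ij _
  have h1 : (MvPolynomial.aeval ![PowerSeries.X, f])
      (MvPolynomial.monomial (monoFn (ij.1.1 : ℕ) (ij.1.2 : ℕ)) (y ij))
      = PowerSeries.C (y ij) * (PowerSeries.X ^ (ij.1.1 : ℕ) * f ^ (ij.1.2 : ℕ)) := by
    rw [monomial_monoFn_eq]
    simp only [map_mul, map_pow, MvPolynomial.aeval_X, MvPolynomial.aeval_C,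
      Matrix.cons_val_zero, Matrix.cons_val_one, Matrix.head_cons,
      PowerSeries.algebraMap_apply, Algebra.algebraMap_self, RingHom.id_apply, mul_assoc]
  rw [h1, PowerSeries.coeff_C_mul]

end Aux

set_option synthInstance.maxHeartbeats 1000000 in
/-- If `𝕂` is a subfield of `ℂ_p` and `f ∈ 𝕂[[z]]` has radius of convergence `ρ` and is
algebraic of (minimal) total degree `n` over `ℂ_p[z]`, then `f` is algebraic of degree `n`
over `𝕂[z]`: some nonzero polynomial `P̄(X,Y)` of total degree `n` with coefficients in `𝕂`
vanishes identically on the graph of `f` over `B(0,ρ)`. -/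
theorem algebraic_over_subfield {p : ℕ} [Fact p.Prime]
    (Cp : Type) [NontriviallyNormedField Cp] [IsUltrametricDist Cp] [CompleteSpace Cp]
    [IsAlgClosed Cp] [Algebra ℚ_[p] Cp]
    (hisom : ∀ x : ℚ_[p], ‖algebraMap ℚ_[p] Cp x‖ = ‖x‖)
    (K : Subfield Cp) (ρ : ℝ≥0∞) (hρ : 0 < ρ)
    (a : ℕ → Cp) (ha : ∀ n, a n ∈ K)
    (hconv : ∀ z : Cp, (‖z‖₊ : ℝ≥0∞) < ρ → Summable fun n => a n * z ^ n)
    (F : Cp → Cp) (hF : ∀ z : Cp, F z = ∑' n, a n * z ^ n)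
    (n : ℕ) (P : MvPolynomial (Fin 2) Cp) (hP0 : P ≠ 0) (hPdeg : P.totalDegree = n)
    (hPvan : ∀ z : Cp, (‖z‖₊ : ℝ≥0∞) < ρ → MvPolynomial.eval ![z, F z] P = 0)
    (hmin : ∀ Q : MvPolynomial (Fin 2) Cp, Q ≠ 0 →
      (∀ z : Cp, (‖z‖₊ : ℝ≥0∞) < ρ → MvPolynomial.eval ![z, F z] Q = 0) →
      n ≤ Q.totalDegree) :
    ∃ Q : MvPolynomial (Fin 2) Cp, Q ≠ 0 ∧ Q.totalDegree = n ∧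
      (∀ m, Q.coeff m ∈ K) ∧
      ∀ z : Cp, (‖z‖₊ : ℝ≥0∞) < ρ → MvPolynomial.eval ![z, F z] Q = 0 := by
  classical
  have hppos : (0:ℝ) < (p:ℝ)⁻¹ := by
    have h0 : (0:ℝ) < p := by exact_mod_cast (Fact.out (p := p.Prime)).pos
    positivity
  have hplt : ((p:ℝ))⁻¹ < 1 := by
    have h1 : (1:ℝ) < p := by exact_mod_cast (Fact.out (p := p.Prime)).one_lt
    exact inv_lt_one_of_one_lt₀ h1
  have hsmall : ∀ ε : ℝ, 0 < ε → ∃ t : Cp, t ≠ 0 ∧ ‖t‖ < ε ∧ ‖t‖ ≤ 1 := by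
    intro ε hε
    obtain ⟨k, hk⟩ := exists_pow_lt_of_lt_one hε hplt
    set t : Cp := algebraMap ℚ_[p] Cp ((p : ℚ_[p]) ^ k) with ht
    have hn : ‖t‖ = ((p:ℝ))⁻¹ ^ k := by rw [ht, hisom, norm_pow, Padic.norm_p]
    refine ⟨t, ?_, ?_, ?_⟩
    · intro h0
      rw [h0, norm_zero] at hn
      exact absurd hn.symm (ne_of_gt (pow_pos hppos k))
    · rw [hn]; exact hk
    · rw [hn]; exact pow_le_one₀ (le_of_lt hppos) (le_of_lt hplt)
  set f : PowerSeries Cp := PowerSeries.mk a with hf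
  have hfK : ∀ (j m : ℕ), PowerSeries.coeff m (f ^ j) ∈ K := by
    intro j
    induction j with
    | zero =>
        intro m
        rw [pow_zero, PowerSeries.coeff_one]
        split
        · exact one_mem K
        · exact zero_mem K
    | succ j ih =>
        intro m
        rw [pow_succ, PowerSeries.coeff_mul]
        refine sum_mem fun kl _ => mul_mem (ih _) ?_
        rw [hf, PowerSeries.coeff_mk]
        exact ha _
  have hXfK : ∀ (i j m : ℕ), PowerSeries.coeff m (PowerSeries.X ^ i * f ^ j) ∈ K := by
    intro i j m
    rw [PowerSeries.coeff_mul]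
    refine sum_mem fun kl _ => mul_mem ?_ (hfK j _)
    rw [PowerSeries.coeff_X_pow]
    split
    · exact one_mem K
    · exact zero_mem K
  set x : idxSet n → Cp := fun ij => P.coeff (monoFn ij.1.1 ij.1.2) with hx
  have hPx : P = Qb n x := Qb_eq_of P (le_of_eq hPdeg)
  have hx0 : x ≠ 0 := by
    intro h
    apply hP0
    rw [hPx, h]
    simp [Qb]
  have hbzero : ∀ m, PowerSeries.coeff m
      (MvPolynomial.aeval ![PowerSeries.X, f] P) = 0 := by
    apply coeffs_eq_zero hsmall hρ
    intro z hz
    have hs := hasSum_aeval a hconv F hF P z hz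
    rwa [hPvan z hz] at hs
  set A : ℕ → idxSet n → K := fun m ij =>
    ⟨PowerSeries.coeff m (PowerSeries.X ^ (ij.1.1 : ℕ) * f ^ (ij.1.2 : ℕ)),
      hXfK _ _ _⟩ with hA
  have hAx : ∀ m, ∑ ij : idxSet n, K.subtype (A m ij) * x ij = 0 := by
    intro m
    have h := hbzero m
    rw [hPx, coeff_aeval_Qb] at h
    rw [← h]
    apply Finset.sum_congr rfl
    intro ij _
    rw [mul_comm]
    rfl
  obtain ⟨y, hy0, hAy⟩ := exists_subfield_solution K.subtype A x hx0 hAx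
  set Q : MvPolynomial (Fin 2) Cp := Qb n (fun ij => (y ij : Cp)) with hQ
  have hQcoeffm : ∀ m, Q.coeff m ∈ K := by
    intro m
    rw [hQ, coeff_Qb]
    refine sum_mem fun ij _ => ?_
    split
    · exact SetLike.coe_mem _
    · exact zero_mem K
  have hQ0 : Q ≠ 0 := by
    obtain ⟨ij₀, hij₀⟩ := Function.ne_iff.mp hy0
    intro h0
    have hc := coeff_Qb_mono n (fun ij => (y ij : Cp)) ij₀
    rw [← hQ, h0] at hc
    simp only [MvPolynomial.coeff_zero] at hc
    exact hij₀ (by exact_mod_cast hc.symm)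
  have hvan : ∀ z : Cp, (‖z‖₊ : ℝ≥0∞) < ρ → MvPolynomial.eval ![z, F z] Q = 0 := by
    intro z hz
    have hs := hasSum_aeval a hconv F hF Q z hz
    have hzero : ∀ m, PowerSeries.coeff m
        (MvPolynomial.aeval ![PowerSeries.X, f] Q) = 0 := by
      intro m
      rw [hQ, coeff_aeval_Qb]
      have hterm : ∀ ij : idxSet n, ((y ij : Cp))
          * PowerSeries.coeff m (PowerSeries.X ^ (ij.1.1 : ℕ) * f ^ (ij.1.2 : ℕ))
          = K.subtype (A m ij * y ij) := by
        intro ij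
        have hmm : K.subtype (A m ij * y ij) = K.subtype (A m ij) * K.subtype (y ij) :=
          map_mul _ _ _
        rw [hmm, mul_comm (K.subtype (A m ij)) (K.subtype (y ij))]
        rfl
      rw [Finset.sum_congr rfl (fun ij _ => hterm ij), ← map_sum K.subtype (fun ij => A m ij * y ij) Finset.univ,
        hAy m, RingHom.map_zero]
    have hfun : (fun m => PowerSeries.coeff m
        (MvPolynomial.aeval ![PowerSeries.X, f] Q) * z ^ m) = fun _ => (0:Cp) :=
      funext fun m => by rw [hzero m, zero_mul]
    rw [hfun] at hs
    exact (HasSum.unique hasSum_zero hs).symm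
  exact ⟨Q, hQ0, le_antisymm (totalDegree_Qb n _) (hmin Q hQ0 hvan), hQcoeffm, hvan⟩
end

section
/- Let 𝕂 be a countable subfield of ℂ_p and ρ ∈ (0,∞]. The set of power series with coefficients in 𝕂, radius of convergence ρ, that are algebraic over ℂ_p[z] (i.e., satisfy a nontrivial polynomial identity P(z, f(z)) = 0 on B(0,ρ) for some nonzero P ∈ ℂ_p[X,Y]) is countable. -/
open scoped ENNReal

set_option linter.unusedSectionVars false
set_option linter.deprecated false

namespace CountAlgAux

open PowerSeries

instance countablePolynomial {R : Type*} [Semiring R] [Countable R] :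
    Countable (Polynomial R) := by
  haveI : Countable (AddMonoidAlgebra R ℕ) := Function.Injective.countable (f := AddMonoidAlgebra.coeff)
    (fun x y h => by cases x; cases y; simpa using h)
  exact Function.Injective.countable (fun p q h => by
    cases p; cases q; simpa using h : Function.Injective Polynomial.toFinsupp)

variable {Cp : Type} [NontriviallyNormedField Cp] [CompleteSpace Cp]

private lemma shift_summable {c : ℕ → Cp} {r : ℝ} (hr : 0 < r)
    (h : Summable fun n => ‖c n‖ * r ^ n) :
    Summable fun n => ‖c (n + 1)‖ * r ^ n := by
  have h1 : Summable fun n => ‖c (n + 1)‖ * r ^ (n + 1) :=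
    (summable_nat_add_iff 1).mpr h
  refine (h1.mul_right r⁻¹).congr fun n => ?_
  rw [pow_succ, ← mul_assoc, mul_assoc (‖c (n + 1)‖ * r ^ n), mul_inv_cancel₀ hr.ne',
    mul_one]

private lemma norm_summable_at {c : ℕ → Cp} {r : ℝ}
    (h : Summable fun n => ‖c n‖ * r ^ n) {z : Cp} (hz : ‖z‖ ≤ r) :
    Summable fun n => ‖c n * z ^ n‖ := by
  refine h.of_nonneg_of_le (fun n => norm_nonneg _) fun n => ?_
  rw [norm_mul, norm_pow]
  exact mul_le_mul_of_nonneg_left (pow_le_pow_left₀ (norm_nonneg z) hz n) (norm_nonneg _)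

set_option maxHeartbeats 1000000 in
private lemma head_zero {r : ℝ} (hr : 0 < r) (c : ℕ → Cp)
    (hsum : Summable fun n => ‖c n‖ * r ^ n)
    (hzero : ∀ z : Cp, 0 < ‖z‖ → ‖z‖ < r → ∑' n, c n * z ^ n = 0) :
    c 0 = 0 := by
  set Cb : ℝ := ∑' n, ‖c (n + 1)‖ * r ^ n with hCb
  have hCb0 : 0 ≤ Cb := tsum_nonneg fun n => by positivity
  have key : ∀ z : Cp, 0 < ‖z‖ → ‖z‖ < r → ‖c 0‖ ≤ Cb * ‖z‖ := by
    intro z hz1 hz2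
    have hsz : Summable fun n => c n * z ^ n :=
      (norm_summable_at hsum hz2.le).of_norm
    have hsplit := Summable.tsum_eq_zero_add hsz
    rw [hzero z hz1 hz2, pow_zero, mul_one] at hsplit
    have hc0 : c 0 = -∑' n, c (n + 1) * z ^ (n + 1) := by
      rw [eq_neg_iff_add_eq_zero, ← hsplit]
    have hnsum : Summable fun n => ‖c (n + 1) * z ^ (n + 1)‖ :=
      (summable_nat_add_iff 1).mpr (norm_summable_at hsum hz2.le)
    have hRsum : Summable fun n => ‖c (n + 1)‖ * r ^ n * ‖z‖ :=
      (shift_summable hr hsum).mul_right ‖z‖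
    calc ‖c 0‖ = ‖∑' n, c (n + 1) * z ^ (n + 1)‖ := by rw [hc0, norm_neg]
      _ ≤ ∑' n, ‖c (n + 1) * z ^ (n + 1)‖ := norm_tsum_le_tsum_norm hnsum
      _ ≤ ∑' n, ‖c (n + 1)‖ * r ^ n * ‖z‖ := by
          refine Summable.tsum_le_tsum (fun n => ?_) hnsum hRsum
          rw [norm_mul, norm_pow, pow_succ, ← mul_assoc]
          have h1 : ‖c (n + 1)‖ * ‖z‖ ^ n ≤ ‖c (n + 1)‖ * r ^ n :=
            mul_le_mul_of_nonneg_left (pow_le_pow_left₀ (norm_nonneg z) hz2.le n)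
              (norm_nonneg _)
          exact mul_le_mul_of_nonneg_right h1 (norm_nonneg z)
      _ = Cb * ‖z‖ := tsum_mul_right
  have hle : ‖c 0‖ ≤ 0 := by
    refine le_of_forall_pos_le_add fun ε hε => ?_
    have hmin : 0 < min r (ε / (Cb + 1)) := lt_min hr (by positivity)
    obtain ⟨z, hz1, hz2⟩ := NormedField.exists_norm_lt Cp hmin
    have hzr : ‖z‖ < r := hz2.trans_le (min_le_left _ _)
    have hzε : ‖z‖ < ε / (Cb + 1) := hz2.trans_le (min_le_right _ _)
    have := key z hz1 hzr
    have h2 : Cb * ‖z‖ ≤ (Cb + 1) * ‖z‖ :=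
      mul_le_mul_of_nonneg_right (by linarith) (norm_nonneg z)
    have h3 : (Cb + 1) * ‖z‖ < (Cb + 1) * (ε / (Cb + 1)) :=
      mul_lt_mul_of_pos_left hzε (by linarith)
    have h4 : (Cb + 1) * (ε / (Cb + 1)) = ε := by field_simp
    linarith
  simpa using norm_le_zero_iff.mp hle

private lemma all_zero {r : ℝ} (hr : 0 < r) :
    ∀ (c : ℕ → Cp), (Summable fun n => ‖c n‖ * r ^ n) →
    (∀ z : Cp, 0 < ‖z‖ → ‖z‖ < r → ∑' n, c n * z ^ n = 0) → ∀ n, c n = 0 := by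
  intro c hsum hzero n
  induction n generalizing c with
  | zero => exact head_zero hr c hsum hzero
  | succ n ih =>
    have h0 : c 0 = 0 := head_zero hr c hsum hzero
    refine ih (fun k => c (k + 1)) (shift_summable hr hsum) (fun z hz1 hz2 => ?_)
    have hsz : Summable fun k => c k * z ^ k := (norm_summable_at hsum hz2.le).of_norm
    have hsplit := Summable.tsum_eq_zero_add hsz
    rw [hzero z hz1 hz2, h0, zero_mul, zero_add] at hsplit
    have hfac : ∑' k, c (k + 1) * z ^ (k + 1) = (∑' k, c (k + 1) * z ^ k) * z := by
      rw [← tsum_mul_right]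
      exact tsum_congr fun k => by rw [pow_succ, mul_assoc]
    rw [hfac] at hsplit
    rcases mul_eq_zero.mp hsplit.symm with h | h
    · exact h
    · exact absurd h (by simpa using hz1.ne')

/-- norm-summability of the coefficients against radius `r`. -/
private def Gd (r : ℝ) (B : PowerSeries Cp) : Prop :=
  Summable fun n => ‖(coeff (R := Cp) n) B‖ * r ^ n

/-- sum of the power series at a point. -/
private noncomputable def sAt (B : PowerSeries Cp) (z : Cp) : Cp :=
  ∑' n, (coeff (R := Cp) n) B * z ^ n

private lemma gd_C {r : ℝ} (c : Cp) : Gd r (C (R := Cp) c) := by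
  unfold Gd
  refine summable_of_ne_finset_zero (s := {0}) fun n hn => ?_
  rw [coeff_C, if_neg (by simpa using hn), norm_zero, zero_mul]

private lemma gd_one {r : ℝ} : Gd r (1 : PowerSeries Cp) := by
  simpa [Gd] using gd_C (r := r) (1 : Cp)

private lemma gd_X {r : ℝ} : Gd r (X : PowerSeries Cp) := by
  unfold Gd
  refine summable_of_ne_finset_zero (s := {1}) fun n hn => ?_
  rw [coeff_X, if_neg (by simpa using hn), norm_zero, zero_mul]

private lemma Gd.mul {r : ℝ} (hr : 0 ≤ r) {B D : PowerSeries Cp}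
    (hB : Gd r B) (hD : Gd r D) : Gd r (B * D) := by
  have hf : Summable fun n => ‖‖(coeff (R := Cp) n) B‖ * r ^ n‖ := by
    refine hB.congr fun n => ?_
    rw [Real.norm_of_nonneg (by positivity)]
  have hg : Summable fun n => ‖‖(coeff (R := Cp) n) D‖ * r ^ n‖ := by
    refine hD.congr fun n => ?_
    rw [Real.norm_of_nonneg (by positivity)]
  have key := summable_norm_sum_mul_antidiagonal_of_summable_norm hf hg
  refine key.of_nonneg_of_le (fun n => by positivity) fun n => ?_
  have hnn : (0:ℝ) ≤ ∑ kl ∈ Finset.HasAntidiagonal.antidiagonal n,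
      (‖(coeff (R := Cp) kl.1) B‖ * r ^ kl.1) * (‖(coeff (R := Cp) kl.2) D‖ * r ^ kl.2) :=
    Finset.sum_nonneg fun kl _ => by positivity
  calc ‖(coeff (R := Cp) n) (B * D)‖ * r ^ n
      ≤ (∑ kl ∈ Finset.HasAntidiagonal.antidiagonal n, ‖(coeff (R := Cp) kl.1) B‖ * ‖(coeff (R := Cp) kl.2) D‖) * r ^ n := by
        refine mul_le_mul_of_nonneg_right ?_ (by positivity)
        rw [coeff_mul]
        exact (norm_sum_le _ _).trans (le_of_eq (Finset.sum_congr rfl fun kl _ => norm_mul _ _))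
    _ = ∑ kl ∈ Finset.HasAntidiagonal.antidiagonal n,
          (‖(coeff (R := Cp) kl.1) B‖ * r ^ kl.1) * (‖(coeff (R := Cp) kl.2) D‖ * r ^ kl.2) := by
        rw [Finset.sum_mul]
        refine Finset.sum_congr rfl fun kl hkl => ?_
        rw [← Finset.HasAntidiagonal.mem_antidiagonal.mp hkl, pow_add]
        ring
    _ ≤ ‖∑ kl ∈ Finset.HasAntidiagonal.antidiagonal n,
          (‖(coeff (R := Cp) kl.1) B‖ * r ^ kl.1) * (‖(coeff (R := Cp) kl.2) D‖ * r ^ kl.2)‖ :=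
        Real.le_norm_self _

private lemma Gd.pow {r : ℝ} (hr : 0 ≤ r) {B : PowerSeries Cp} (hB : Gd r B) :
    ∀ j : ℕ, Gd r (B ^ j)
  | 0 => by rw [pow_zero]; exact gd_one
  | (j+1) => by rw [pow_succ]; exact Gd.mul hr (Gd.pow hr hB j) hB

private lemma sAt_C {c : Cp} {z : Cp} : sAt (C (R := Cp) c) z = c := by
  rw [sAt, tsum_eq_single 0 (fun n hn => by rw [coeff_C, if_neg hn, zero_mul])]
  simp [coeff_C]

private lemma sAt_one {z : Cp} : sAt (1 : PowerSeries Cp) z = 1 := by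
  simpa [sAt] using sAt_C (c := (1:Cp)) (z := z)

private lemma sAt_X {z : Cp} : sAt (X : PowerSeries Cp) z = z := by
  rw [sAt, tsum_eq_single 1 (fun n hn => by rw [coeff_X, if_neg hn, zero_mul])]
  simp [coeff_X]

private lemma sAt_mul {r : ℝ} {B D : PowerSeries Cp}
    (hB : Gd r B) (hD : Gd r D) {z : Cp} (hz : ‖z‖ ≤ r) :
    sAt (B * D) z = sAt B z * sAt D z := by
  have hf : Summable fun n => ‖(coeff (R := Cp) n) B * z ^ n‖ := norm_summable_at hB hz
  have hg : Summable fun n => ‖(coeff (R := Cp) n) D * z ^ n‖ := norm_summable_at hD hz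
  have key := tsum_mul_tsum_eq_tsum_sum_antidiagonal_of_summable_norm hf hg
  rw [sAt, sAt, sAt, key]
  refine tsum_congr fun n => ?_
  rw [coeff_mul, Finset.sum_mul]
  refine Finset.sum_congr rfl fun kl hkl => ?_
  rw [← Finset.HasAntidiagonal.mem_antidiagonal.mp hkl, pow_add]
  ring

private lemma sAt_pow {r : ℝ} {B : PowerSeries Cp} (hr : 0 ≤ r) (hB : Gd r B)
    {z : Cp} (hz : ‖z‖ ≤ r) : ∀ j : ℕ, sAt (B ^ j) z = (sAt B z) ^ j
  | 0 => by rw [pow_zero, pow_zero, sAt_one]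
  | (j+1) => by
      rw [pow_succ, pow_succ, sAt_mul (Gd.pow hr hB j) hB hz, sAt_pow hr hB hz j]

private lemma gd_sum {r : ℝ} (hr : 0 ≤ r) {ι : Type*} (s : Finset ι)
    (B : ι → PowerSeries Cp) (h : ∀ i ∈ s, Gd r (B i)) : Gd r (∑ i ∈ s, B i) := by
  classical
  induction s using Finset.induction with
  | empty => unfold Gd; refine summable_of_ne_finset_zero (s := ∅) fun n _ => by simp
  | @insert i s hi ih =>
    rw [Finset.sum_insert hi]
    have h1 : Gd r (B i) := h i (Finset.mem_insert_self i s)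
    have h2 : Gd r (∑ j ∈ s, B j) := ih fun j hj => h j (Finset.mem_insert_of_mem hj)
    refine (h1.add h2).of_nonneg_of_le (fun n => by positivity) fun n => ?_
    rw [← add_mul, map_add]
    exact mul_le_mul_of_nonneg_right (norm_add_le _ _) (by positivity)

private lemma sAt_sum {r : ℝ} {ι : Type*} (s : Finset ι)
    (B : ι → PowerSeries Cp) (h : ∀ i ∈ s, Gd r (B i)) {z : Cp} (hz : ‖z‖ ≤ r) :
    sAt (∑ i ∈ s, B i) z = ∑ i ∈ s, sAt (B i) z := by
  calc sAt (∑ i ∈ s, B i) z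
      = ∑' n, ∑ i ∈ s, (coeff (R := Cp) n) (B i) * z ^ n :=
        tsum_congr fun n => by rw [map_sum, Finset.sum_mul]
    _ = ∑ i ∈ s, sAt (B i) z :=
        Summable.tsum_finsetSum fun i hi => (norm_summable_at (h i hi) hz).of_norm

private lemma coeffs_vanish (a : ℕ → Cp) (ρ : ℝ≥0∞) (hρ : 0 < ρ)
    (hconv : ∀ z : Cp, (‖z‖₊ : ℝ≥0∞) < ρ → Summable fun n => a n * z ^ n)
    (P : MvPolynomial (Fin 2) Cp)
    (hPe : ∀ z : Cp, (‖z‖₊ : ℝ≥0∞) < ρ →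
      MvPolynomial.eval ![z, ∑' n, a n * z ^ n] P = 0) :
    ∀ n, (coeff (R := Cp) n) (∑ m ∈ P.support,
      C (R := Cp) (P.coeff m) * (X ^ (m 0) * (PowerSeries.mk a) ^ (m 1))) = 0 := by
  obtain ⟨δ, hδ0, hδρ⟩ : ∃ δ : NNReal, 0 < δ ∧ (δ : ℝ≥0∞) < ρ := by
    obtain ⟨δ, h1, h2⟩ := ENNReal.lt_iff_exists_nnreal_btwn.mp hρ
    exact ⟨δ, by exact_mod_cast h1, h2⟩
  obtain ⟨z0, hz01, hz02⟩ := NormedField.exists_norm_lt Cp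
    (show (0:ℝ) < ↑δ from by exact_mod_cast hδ0)
  set r : ℝ := ‖z0‖ / 2 with hrdef
  have hr : 0 < r := by positivity
  have hrz0 : r < ‖z0‖ := half_lt_self hz01
  have hball : ∀ z : Cp, ‖z‖ ≤ r → (‖z‖₊ : ℝ≥0∞) < ρ := by
    intro z hz
    have h1 : ‖z‖ < (δ : ℝ) := lt_of_le_of_lt hz (lt_trans hrz0 hz02)
    have h2 : ‖z‖₊ < δ := by rwa [← NNReal.coe_lt_coe, coe_nnnorm]
    exact lt_trans (ENNReal.coe_lt_coe.mpr h2) hδρ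
  have hz0ρ : (‖z0‖₊ : ℝ≥0∞) < ρ := by
    have h2 : ‖z0‖₊ < δ := by rwa [← NNReal.coe_lt_coe, coe_nnnorm]
    exact lt_trans (ENNReal.coe_lt_coe.mpr h2) hδρ
  obtain ⟨Cb, hCb⟩ : ∃ Cb : ℝ, ∀ n, ‖a n‖ * ‖z0‖ ^ n ≤ Cb := by
    have ht : Filter.Tendsto (fun n => ‖a n * z0 ^ n‖) Filter.atTop (nhds 0) := by
      simpa using ((hconv z0 hz0ρ).tendsto_atTop_zero).norm
    obtain ⟨Cb, hCb⟩ := ht.bddAbove_range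
    refine ⟨Cb, fun n => ?_⟩
    have := hCb (Set.mem_range_self (f := fun n => ‖a n * z0 ^ n‖) n)
    rwa [norm_mul, norm_pow] at this
  set F : PowerSeries Cp := PowerSeries.mk a with hF
  have hGdF : Gd r F := by
    have hgeo : Summable fun n : ℕ => Cb * (1/2 : ℝ) ^ n :=
      (summable_geometric_of_lt_one (by norm_num) (by norm_num)).mul_left Cb
    refine hgeo.of_nonneg_of_le (fun n => by positivity) fun n => ?_
    have hpow : r ^ n = ‖z0‖ ^ n * (1/2 : ℝ) ^ n := by
      rw [← mul_pow]; congr 1; rw [hrdef]; ring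
    calc ‖(coeff (R := Cp) n) F‖ * r ^ n = (‖a n‖ * ‖z0‖ ^ n) * (1/2 : ℝ) ^ n := by
          rw [hF, coeff_mk, hpow]; ring
      _ ≤ Cb * (1/2 : ℝ) ^ n :=
          mul_le_mul_of_nonneg_right (hCb n) (by positivity)
  have hmono : ∀ m ∈ P.support, Gd r (C (R := Cp) (P.coeff m) * (X ^ (m 0) * F ^ (m 1))) :=
    fun m _ => Gd.mul hr.le (gd_C _) (Gd.mul hr.le (Gd.pow hr.le gd_X _) (Gd.pow hr.le hGdF _))
  have hGgood := gd_sum hr.le P.support _ hmono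
  refine all_zero hr _ hGgood fun z hz1 hz2 => ?_
  have hz' : ‖z‖ ≤ r := hz2.le
  have h0 := hPe z (hball z hz')
  rw [MvPolynomial.eval_eq'] at h0
  simp only [Fin.prod_univ_two, Matrix.cons_val_zero, Matrix.cons_val_one,
    Matrix.head_cons] at h0
  have hsF : sAt F z = ∑' n, a n * z ^ n := tsum_congr fun n => by rw [hF, coeff_mk]
  calc (∑' n, (coeff (R := Cp) n) (∑ m ∈ P.support,
          C (R := Cp) (P.coeff m) * (X ^ (m 0) * F ^ (m 1))) * z ^ n)
      = ∑ m ∈ P.support, sAt (C (R := Cp) (P.coeff m) * (X ^ (m 0) * F ^ (m 1))) z :=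
        sAt_sum P.support _ hmono hz'
    _ = ∑ m ∈ P.support, P.coeff m * (z ^ m 0 * (∑' n, a n * z ^ n) ^ m 1) := by
        refine Finset.sum_congr rfl fun m hm => ?_
        have g1 : Gd r ((X : PowerSeries Cp) ^ (m 0)) := Gd.pow hr.le gd_X _
        have g2 : Gd r (F ^ (m 1)) := Gd.pow hr.le hGdF _
        rw [sAt_mul (gd_C _) (Gd.mul hr.le g1 g2) hz', sAt_C,
          sAt_mul g1 g2 hz', sAt_pow hr.le gd_X hz', sAt_pow hr.le hGdF hz', sAt_X, hsF]
    _ = 0 := h0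

private lemma descent {K : Subfield Cp} (a : ℕ → Cp) (haK : ∀ n, a n ∈ K)
    (P : MvPolynomial (Fin 2) Cp) (hP : P ≠ 0)
    (hcoeff : ∀ n, (coeff (R := Cp) n) (∑ m ∈ P.support,
      C (R := Cp) (P.coeff m) * (X ^ (m 0) * (PowerSeries.mk a) ^ (m 1))) = 0) :
    ∃ q : Polynomial (Polynomial ↥K), q ≠ 0 ∧
      Polynomial.eval (PowerSeries.mk fun n => (⟨a n, haK n⟩ : ↥K))
        (q.map (Polynomial.coeToPowerSeries.ringHom)) = 0 := by
  classical
  set F : PowerSeries Cp := PowerSeries.mk a with hF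
  set F' : PowerSeries ↥K := PowerSeries.mk (fun n => (⟨a n, haK n⟩ : ↥K)) with hF'def
  obtain ⟨mh, hmh⟩ : P.support.Nonempty := MvPolynomial.support_nonempty.mpr hP
  have hcmh : P.coeff mh ≠ 0 := MvPolynomial.mem_support_iff.mp hmh
  -- a K-linear functional g on Cp with g (P.coeff mh) = 1
  have hsmul : ∀ (k : ↥K) (c : Cp), k • c = (↑k : Cp) * c := fun k c => rfl
  let ψ : ↥K →ₗ[↥K] Cp := LinearMap.toSpanSingleton ↥K Cp (P.coeff mh)
  have hψ : LinearMap.ker ψ = ⊥ := by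
    rw [LinearMap.ker_eq_bot]
    intro u v huv
    have h1 : (↑u : Cp) * P.coeff mh = (↑v : Cp) * P.coeff mh := by
      simpa [ψ, LinearMap.toSpanSingleton_apply, hsmul] using huv
    exact Subtype.ext (mul_right_cancel₀ hcmh h1)
  obtain ⟨g, hg⟩ := ψ.exists_leftInverse_of_injective hψ
  have hg1 : g (P.coeff mh) = 1 := by
    have h1 : ψ 1 = P.coeff mh := by
      rw [LinearMap.toSpanSingleton_apply, one_smul]
    have h2 := congrArg (fun h : ↥K →ₗ[↥K] ↥K => h 1) hg
    simpa [h1] using h2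
  set W : (Fin 2 →₀ ℕ) → PowerSeries ↥K := fun m => X ^ (m 0) * F' ^ (m 1) with hWdef
  have hF'map : PowerSeries.map K.subtype F' = F := by
    ext n
    simp [hF'def, hF, PowerSeries.coeff_map, coeff_mk, Subfield.coe_subtype]
  have hW : ∀ m : Fin 2 →₀ ℕ, PowerSeries.map K.subtype (W m) = X ^ (m 0) * F ^ (m 1) := by
    intro m
    rw [hWdef, map_mul, map_pow, map_pow, PowerSeries.map_X, hF'map]
  have E : ∀ n, ∑ m ∈ P.support, ((coeff (R := ↥K) n) (W m)) • (P.coeff m) = 0 := by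
    intro n
    calc ∑ m ∈ P.support, ((coeff (R := ↥K) n) (W m)) • (P.coeff m)
        = ∑ m ∈ P.support,
            (coeff (R := Cp) n) (C (R := Cp) (P.coeff m) * (X ^ (m 0) * F ^ (m 1))) := by
          refine Finset.sum_congr rfl fun m hm => ?_
          rw [coeff_C_mul, ← hW m, PowerSeries.coeff_map, hsmul]
          rw [mul_comm]
          simp [Subfield.coe_subtype]
      _ = (coeff (R := Cp) n) (∑ m ∈ P.support,
            C (R := Cp) (P.coeff m) * (X ^ (m 0) * F ^ (m 1))) := (map_sum _ _ _).symm
      _ = 0 := hcoeff n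
  have hqK : ∀ n, ∑ m ∈ P.support, ((coeff (R := ↥K) n) (W m)) * g (P.coeff m) = 0 := by
    intro n
    have h1 := congrArg g (E n)
    rw [map_sum, map_zero] at h1
    simpa [map_smul, smul_eq_mul] using h1
  have hH : (∑ m ∈ P.support, PowerSeries.C (R := ↥K) (g (P.coeff m)) * W m) = 0 := by
    refine PowerSeries.ext fun n => ?_
    rw [map_sum, map_zero]
    simp only [coeff_C_mul]
    simpa [mul_comm] using hqK n
  refine ⟨∑ m ∈ P.support,
    Polynomial.C (Polynomial.C (g (P.coeff m)) * Polynomial.X ^ (m 0)) *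
      Polynomial.X ^ (m 1), ?_, ?_⟩
  · -- nonzero: look at coefficient at (mh 1, mh 0)
    intro h
    have h1 := congrArg (fun p : Polynomial (Polynomial ↥K) =>
      (p.coeff (mh 1)).coeff (mh 0)) h
    simp only [Polynomial.finset_sum_coeff, Polynomial.coeff_C_mul_X_pow,
      Polynomial.coeff_zero] at h1
    rw [Finset.sum_eq_single mh] at h1
    · rw [if_pos rfl, Polynomial.coeff_C_mul_X_pow, if_pos rfl, hg1] at h1
      exact one_ne_zero h1
    · intro m hm hne
      by_cases h2 : mh 1 = m 1
      · rw [if_pos h2, Polynomial.coeff_C_mul_X_pow]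
        rw [if_neg ?_]
        intro h3
        exact hne (Finsupp.ext fun i => by
          fin_cases i
          · exact h3.symm
          · exact h2.symm)
      · rw [if_neg h2, Polynomial.coeff_zero]
    · intro h2
      exact absurd hmh h2
  · -- it is a root
    rw [Polynomial.eval_map, Polynomial.eval₂_finset_sum]
    rw [← hH]
    refine Finset.sum_congr rfl fun m hm => ?_
    rw [Polynomial.eval₂_mul, Polynomial.eval₂_C, Polynomial.eval₂_pow, Polynomial.eval₂_X]
    rw [Polynomial.coeToPowerSeries.ringHom_apply]
    push_cast
    rw [hWdef]
    ring

end CountAlgAux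

open CountAlgAux PowerSeries

/-- For a countable subfield `𝕂 ⊆ ℂ_p`, the set of power series with coefficients in `𝕂`,
radius of convergence `ρ`, that are algebraic over `ℂ_p[z]`, is countable. -/
theorem countable_algebraic_power_series {p : ℕ} [Fact p.Prime]
    (Cp : Type) [NontriviallyNormedField Cp] [IsUltrametricDist Cp] [CompleteSpace Cp]
    [IsAlgClosed Cp] [Algebra ℚ_[p] Cp]
    (hisom : ∀ x : ℚ_[p], ‖algebraMap ℚ_[p] Cp x‖ = ‖x‖)
    (K : Subfield Cp) (hK : (K : Set Cp).Countable)
    (ρ : ℝ≥0∞) (hρ : 0 < ρ) :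
    Set.Countable {a : ℕ → Cp |
      (∀ n, a n ∈ K) ∧
      (∀ z : Cp, (‖z‖₊ : ℝ≥0∞) < ρ → Summable fun n => a n * z ^ n) ∧
      (∀ z : Cp, ρ < (‖z‖₊ : ℝ≥0∞) → ¬ Summable fun n => a n * z ^ n) ∧
      ∃ P : MvPolynomial (Fin 2) Cp, P ≠ 0 ∧
        ∀ z : Cp, (‖z‖₊ : ℝ≥0∞) < ρ →
          MvPolynomial.eval ![z, ∑' n, a n * z ^ n] P = 0} := by
  classical
  haveI : Countable ↥K := hK.to_subtype
  haveI : Countable (Polynomial (Polynomial ↥K)) := inferInstance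
  set φK : Polynomial ↥K →+* PowerSeries ↥K := Polynomial.coeToPowerSeries.ringHom with hφKdef
  have hφK : Function.Injective φK := by
    intro x y h
    exact Polynomial.coe_injective ↥K h
  set lift : (ℕ → Cp) → PowerSeries ↥K :=
    fun a => PowerSeries.mk fun n => if h : a n ∈ K then (⟨a n, h⟩ : ↥K) else 0 with hliftdef
  have hsub : {a : ℕ → Cp |
      (∀ n, a n ∈ K) ∧
      (∀ z : Cp, (‖z‖₊ : ℝ≥0∞) < ρ → Summable fun n => a n * z ^ n) ∧
      (∀ z : Cp, ρ < (‖z‖₊ : ℝ≥0∞) → ¬ Summable fun n => a n * z ^ n) ∧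
      ∃ P : MvPolynomial (Fin 2) Cp, P ≠ 0 ∧
        ∀ z : Cp, (‖z‖₊ : ℝ≥0∞) < ρ →
          MvPolynomial.eval ![z, ∑' n, a n * z ^ n] P = 0} ⊆
      ⋃ q : {q : Polynomial (Polynomial ↥K) // q ≠ 0},
        {a : ℕ → Cp | (∀ n, a n ∈ K) ∧
          Polynomial.eval (lift a) (Polynomial.map φK (q : Polynomial (Polynomial ↥K))) = 0} := by
    rintro a ⟨haK, hconv, -, P, hP, hPe⟩
    have hcoeff := coeffs_vanish a ρ hρ hconv P hPe
    obtain ⟨q, hq0, hqroot⟩ := descent a haK P hP hcoeff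
    have hlift : lift a = PowerSeries.mk fun n => (⟨a n, haK n⟩ : ↥K) := by
      refine PowerSeries.ext fun n => ?_
      simp [hliftdef, coeff_mk, dif_pos (haK n)]
    refine Set.mem_iUnion.mpr ⟨⟨q, hq0⟩, ⟨haK, ?_⟩⟩
    rw [hlift]
    exact hqroot
  refine Set.Countable.mono hsub (Set.countable_iUnion fun q => ?_)
  have hQ0 : Polynomial.map φK (q : Polynomial (Polynomial ↥K)) ≠ 0 := fun h =>
    q.2 (Polynomial.map_injective φK hφK (by simpa using h))
  have hfin := Polynomial.finite_setOf_isRoot hQ0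
  refine Set.MapsTo.countable_of_injOn (f := lift)
    (t := {x : PowerSeries ↥K |
      Polynomial.IsRoot (Polynomial.map φK (q : Polynomial (Polynomial ↥K))) x})
    (fun a ha => ha.2) ?_ hfin.countable
  intro a ha b hb hab
  funext n
  have h1 := congrArg (fun F => ((PowerSeries.coeff (R := ↥K) n) F : Cp)) hab
  simpa [hliftdef, coeff_mk, dif_pos (ha.1 n), dif_pos (hb.1 n)] using h1
end

section
/- A p-adic entire function f : ℂ_p → ℂ_p (given by an everywhere-convergent power series) is algebraic over ℂ_p[z] (i.e., satisfies P(z, f(z)) = 0 identically for some nonzero P ∈ ℂ_p[X,Y]) if and only if f is a polynomial function. -/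
open Polynomial in
lemma prod_linear_coeff_bound {K : Type} [NontriviallyNormedField K] [IsUltrametricDist K]
    {r : ℝ} (hr : 0 < r) (t : Finset K) (ht : ∀ x ∈ t, ‖x‖ ≤ r) (n : ℕ) :
    ‖(∏ x ∈ t, (X - C x)).coeff n‖ * r ^ n ≤ r ^ t.card := by
  classical
  induction t using Finset.induction_on generalizing n with
  | empty =>
      cases n with
      | zero => simp
      | succ n =>
          simp [Polynomial.coeff_one]
  | @insert x s hx ih =>
      have hxr : ‖x‖ ≤ r := ht x (Finset.mem_insert_self x s)
      have hts : ∀ y ∈ s, ‖y‖ ≤ r := fun y hy => ht y (Finset.mem_insert_of_mem hy)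
      have ihs := ih hts
      rw [Finset.prod_insert hx, Finset.card_insert_of_notMem hx, mul_comm (X - C x)]
      set Q := ∏ y ∈ s, (X - C y) with hQ
      cases n with
      | zero =>
          rw [pow_zero, mul_one, Polynomial.mul_coeff_zero]
          have : ‖Q.coeff 0 * (X - C x).coeff 0‖ ≤ ‖Q.coeff 0‖ * r := by
            rw [norm_mul]
            have : ‖(X - C x).coeff 0‖ ≤ r := by
              simp only [Polynomial.coeff_sub, Polynomial.coeff_X_zero, Polynomial.coeff_C_zero,
                zero_sub, norm_neg]
              exact hxr
            exact mul_le_mul_of_nonneg_left this (norm_nonneg _)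
          refine this.trans ?_
          have h0 := ihs 0
          rw [pow_zero, mul_one] at h0
          calc ‖Q.coeff 0‖ * r ≤ r ^ s.card * r :=
                mul_le_mul_of_nonneg_right h0 hr.le
            _ = r ^ (s.card + 1) := by ring
      | succ n =>
          rw [Polynomial.coeff_mul_X_sub_C]
          have hmax : ‖Q.coeff n - Q.coeff (n + 1) * x‖ ≤ max ‖Q.coeff n‖ (‖Q.coeff (n+1)‖ * ‖x‖) := by
            have := IsUltrametricDist.norm_add_le_max (Q.coeff n) (-(Q.coeff (n + 1) * x))
            simpa [sub_eq_add_neg, norm_mul] using this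
          refine (mul_le_mul_of_nonneg_right hmax (by positivity)).trans ?_
          rw [max_mul_of_nonneg _ _ (by positivity)]
          refine max_le ?_ ?_
          · have := ihs n
            calc ‖Q.coeff n‖ * r ^ (n + 1) = ‖Q.coeff n‖ * r ^ n * r := by ring
              _ ≤ r ^ s.card * r := mul_le_mul_of_nonneg_right this hr.le
              _ = r ^ (s.card + 1) := by ring
          · have h1 := ihs (n+1)
            calc ‖Q.coeff (n+1)‖ * ‖x‖ * r ^ (n + 1)
                = ‖Q.coeff (n+1)‖ * r ^ (n+1) * ‖x‖ := by ring
              _ ≤ r ^ s.card * r := by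
                  refine mul_le_mul h1 hxr (norm_nonneg _) (by positivity)
              _ = r ^ (s.card + 1) := by ring

open Polynomial in
lemma eval_norm_le {K : Type} [NormedField K] (c : Polynomial K) (N : ℕ) (hN : c.natDegree ≤ N)
    (z : K) (hz : 1 ≤ ‖z‖) :
    ‖c.eval z‖ ≤ (∑ i ∈ Finset.range (N+1), ‖c.coeff i‖) * ‖z‖ ^ N := by
  rw [Polynomial.eval_eq_sum_range' (lt_of_le_of_lt hN (Nat.lt_succ_self N))]
  refine (norm_sum_le _ _).trans ?_
  rw [Finset.sum_mul]
  refine Finset.sum_le_sum fun i hi => ?_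
  rw [norm_mul, norm_pow]
  exact mul_le_mul_of_nonneg_left
    (pow_le_pow_right₀ hz (Nat.lt_succ_iff.mp (Finset.mem_range.mp hi)))
    (norm_nonneg _)


open Polynomial in
lemma eval_norm_ge {K : Type} [NormedField K] (c : Polynomial K) (hc : c ≠ 0) :
    ∃ L > (0:ℝ), ∃ R ≥ (1:ℝ), ∀ z : K, R ≤ ‖z‖ → L * ‖z‖ ^ c.natDegree ≤ ‖c.eval z‖ := by
  set D := c.natDegree with hD
  rcases Nat.eq_zero_or_pos D with hD0 | hDpos
  · refine ⟨‖c.coeff 0‖, ?_, 1, le_refl 1, fun z hz => ?_⟩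
    · have : c.coeff 0 ≠ 0 := by
        intro h
        exact hc (Polynomial.eq_C_of_natDegree_eq_zero hD0 ▸ by rw [h, map_zero])
      simpa using this
    · rw [hD0, pow_zero, mul_one]
      conv_lhs => rw [Polynomial.eq_C_of_natDegree_eq_zero hD0]
      rw [Polynomial.eq_C_of_natDegree_eq_zero hD0]
      simp
  · set e := c.eraseLead with he
    have hesplit : ∀ z : K, c.eval z = e.eval z + c.leadingCoeff * z ^ D := by
      intro z
      rw [he]
      conv_lhs => rw [← Polynomial.eraseLead_add_C_mul_X_pow c]
      rw [Polynomial.eval_add, Polynomial.eval_mul, Polynomial.eval_pow, Polynomial.eval_C,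
        Polynomial.eval_X]
    have hedeg : e.natDegree ≤ D - 1 := Polynomial.eraseLead_natDegree_le c
    set B := ∑ i ∈ Finset.range ((D-1)+1), ‖e.coeff i‖ with hB
    have hBnn : 0 ≤ B := Finset.sum_nonneg fun i _ => norm_nonneg _
    have hlead : 0 < ‖c.leadingCoeff‖ := by
      simpa using Polynomial.leadingCoeff_ne_zero.mpr hc
    set L := ‖c.leadingCoeff‖ / 2 with hL
    have hLpos : 0 < L := by positivity
    refine ⟨L, hLpos, max 1 ((B + 1) / L), le_max_left _ _, fun z hz => ?_⟩
    have hz1 : 1 ≤ ‖z‖ := le_trans (le_max_left _ _) hz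
    have hzB : B + 1 ≤ L * ‖z‖ := by
      have : (B + 1) / L ≤ ‖z‖ := le_trans (le_max_right _ _) hz
      calc B + 1 = L * ((B+1)/L) := by field_simp
        _ ≤ L * ‖z‖ := mul_le_mul_of_nonneg_left this hLpos.le
    have heval_e : ‖e.eval z‖ ≤ B * ‖z‖ ^ (D - 1) := eval_norm_le e (D-1) hedeg z hz1
    have hpow : ‖z‖ ^ D = ‖z‖ * ‖z‖ ^ (D - 1) := by
      conv_lhs => rw [show D = (D-1)+1 from (Nat.succ_pred_eq_of_pos hDpos).symm]
      rw [pow_succ]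
      ring
    have key : B * ‖z‖ ^ (D-1) + L * ‖z‖ ^ D ≤ ‖c.leadingCoeff‖ * ‖z‖ ^ D := by
      have h1 : B * ‖z‖ ^ (D-1) ≤ L * ‖z‖ ^ D := by
        rw [hpow, ← mul_assoc]
        refine mul_le_mul_of_nonneg_right ?_ (by positivity)
        nlinarith [hzB]
      have : ‖c.leadingCoeff‖ * ‖z‖ ^ D = L * ‖z‖ ^ D + L * ‖z‖ ^ D := by
        rw [hL]; ring
      rw [this]
      linarith
    have htri : ‖c.leadingCoeff * z ^ D‖ - ‖e.eval z‖ ≤ ‖c.eval z‖ := by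
      rw [hesplit z]
      have := norm_add_le (-(e.eval z)) (e.eval z + c.leadingCoeff * z ^ D)
      simp only [neg_add_cancel_left, norm_neg] at this
      linarith [this]
    rw [norm_mul, norm_pow] at htri
    nlinarith [heval_e, htri, key]

lemma norm_eq_one_of_pow_eq_one {K : Type} [NormedField K] {x : K} {n : ℕ} (hn : n ≠ 0)
    (h : x ^ n = 1) : ‖x‖ = 1 := by
  have h1 : ‖x‖ ^ n = 1 := by rw [← norm_pow, h, norm_one]
  by_contra h2
  rcases lt_or_gt_of_ne h2 with hlt | hgt
  · exact absurd h1 (ne_of_lt (pow_lt_one₀ (norm_nonneg x) hlt hn))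
  · exact absurd h1 (ne_of_gt (one_lt_pow₀ hgt hn))

lemma exists_nodes {p : ℕ} [Fact p.Prime] (Cp : Type) [NontriviallyNormedField Cp]
    [IsUltrametricDist Cp] [IsAlgClosed Cp] [CharZero Cp] [Algebra ℚ_[p] Cp]
    (hisom : ∀ x : ℚ_[p], ‖algebraMap ℚ_[p] Cp x‖ = ‖x‖) (m : ℕ) :
    ∃ s : Finset Cp, m < s.card ∧ (∀ x ∈ s, ‖x‖ = 1) ∧
      ∀ x ∈ s, ∀ y ∈ s, x ≠ y → ‖x - y‖ = 1 := by
  classical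
  obtain ⟨ℓ, hℓge, hℓprime⟩ := Nat.exists_infinite_primes (max m p + 1)
  have hℓm : m < ℓ := lt_of_le_of_lt (le_max_left m p) (Nat.lt_of_succ_le hℓge)
  have hℓp : p < ℓ := lt_of_le_of_lt (le_max_right m p) (Nat.lt_of_succ_le hℓge)
  have hℓ0 : ℓ ≠ 0 := hℓprime.ne_zero
  -- norm of ℓ in Cp is 1
  have hℓnorm : ‖(ℓ : Cp)‖ = 1 := by
    have hmap : ((ℓ : ℚ_[p]) : ℚ_[p]) = (ℓ : ℚ_[p]) := rfl
    have : (ℓ : Cp) = algebraMap ℚ_[p] Cp (ℓ : ℚ_[p]) := by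
      rw [map_natCast]
    rw [this, hisom]
    have hle : ‖((ℓ:ℤ) : ℚ_[p])‖ ≤ 1 := Padic.norm_int_le_one _
    have hnd : ¬ ((p:ℤ) ∣ (ℓ:ℤ)) := by
      rw [Int.natCast_dvd_natCast]
      intro hdvd
      rcases (Nat.Prime.eq_one_or_self_of_dvd hℓprime p hdvd) with h1 | h2
      · exact (Fact.out : p.Prime).one_lt.ne' h1
      · exact absurd h2 hℓp.ne
    have hlt := (Padic.norm_intCast_lt_one_iff (p := p) (k := (ℓ:ℤ))).not.mpr hnd
    push_cast at hle hlt ⊢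
    linarith [lt_or_ge (‖((ℓ:ℚ_[p]))‖) 1 |>.resolve_left hlt]
  haveI : NeZero ((ℓ : Cp)) := ⟨Nat.cast_ne_zero.mpr hℓ0⟩
  obtain ⟨ζ, hζ⟩ := HasEnoughRootsOfUnity.exists_primitiveRoot Cp ℓ
  have hζpow : ζ ^ ℓ = 1 := hζ.pow_eq_one
  have hζnorm : ‖ζ‖ = 1 := norm_eq_one_of_pow_eq_one hℓ0 hζpow
  -- key: for 0 < k < ℓ, ‖ζ^k - 1‖ = 1
  have key : ∀ k : ℕ, 0 < k → k < ℓ → ‖ζ ^ k - 1‖ = 1 := by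
    intro k hk0 hkℓ
    set t : Cp := ζ ^ k - 1 with hts
    have hξpow : (ζ ^ k) ^ ℓ = 1 := by
      rw [← pow_mul, mul_comm, pow_mul, hζpow, one_pow]
    have ht0 : t ≠ 0 := sub_ne_zero.mpr (hζ.pow_ne_one_of_pos_of_lt hk0.ne' hkℓ)
    have htle : ‖t‖ ≤ 1 := by
      have h1 : ‖ζ ^ k‖ = 1 := norm_eq_one_of_pow_eq_one hℓ0 hξpow
      have := IsUltrametricDist.norm_add_le_max (ζ ^ k) (-1)
      simpa [hts, sub_eq_add_neg, h1] using this
    -- binomial expansion of (t+1)^ℓ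
    have hbin : (t + 1) ^ ℓ = ∑ i ∈ Finset.range (ℓ + 1), t ^ i * (ℓ.choose i : Cp) := by
      rw [add_pow]
      refine Finset.sum_congr rfl fun i _ => by ring
    have hsum : ∑ i ∈ Finset.range (ℓ + 1), t ^ i * (ℓ.choose i : Cp) = 1 := by
      rw [← hbin, hts, sub_add_cancel, hξpow]
    -- peel off i = 0
    rw [Finset.sum_range_succ'] at hsum
    simp only [pow_zero, one_mul, Nat.choose_zero_right, Nat.cast_one] at hsum
    have hsum1 : ∑ i ∈ Finset.range ℓ, t ^ (i+1) * (ℓ.choose (i+1) : Cp) = 0 := by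
      linear_combination hsum
    -- peel off i = 0 again (ℓ ≥ 2 so ℓ = (ℓ-1)+1)
    obtain ⟨ℓ', rfl⟩ : ∃ ℓ', ℓ = ℓ' + 1 := ⟨ℓ - 1, (Nat.succ_pred_eq_of_pos hℓprime.pos).symm⟩
    rw [Finset.sum_range_succ'] at hsum1
    simp only [zero_add, pow_one, Nat.choose_one_right] at hsum1
    have hmain : t * ((ℓ'+1 : ℕ) : Cp) = -∑ i ∈ Finset.range ℓ', t ^ (i+1+1) * ((ℓ'+1).choose (i+1+1) : Cp) := by
      linear_combination hsum1
    have hlhs : ‖t * ((ℓ'+1 : ℕ) : Cp)‖ = ‖t‖ := by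
      rw [norm_mul, hℓnorm, mul_one]
    have hrhs : ‖∑ i ∈ Finset.range ℓ', t ^ (i+1+1) * ((ℓ'+1).choose (i+1+1) : Cp)‖ ≤ ‖t‖^2 := by
      refine IsUltrametricDist.norm_sum_le_of_forall_le_of_nonneg (by positivity) fun i _ => ?_
      rw [norm_mul, norm_pow]
      calc ‖t‖ ^ (i+1+1) * ‖(((ℓ'+1).choose (i+1+1) : ℕ) : Cp)‖
          ≤ ‖t‖ ^ (i+1+1) * 1 :=
            mul_le_mul_of_nonneg_left (IsUltrametricDist.norm_natCast_le_one Cp _) (by positivity)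
        _ = ‖t‖ ^ (i+1+1) := mul_one _
        _ ≤ ‖t‖ ^ 2 := pow_le_pow_of_le_one (norm_nonneg t) htle (by omega)
    have : ‖t‖ ≤ ‖t‖ ^ 2 := by
      calc ‖t‖ = ‖t * ((ℓ'+1 : ℕ) : Cp)‖ := hlhs.symm
        _ = ‖-∑ i ∈ Finset.range ℓ', t ^ (i+1+1) * ((ℓ'+1).choose (i+1+1) : Cp)‖ := by rw [hmain]
        _ = ‖∑ i ∈ Finset.range ℓ', t ^ (i+1+1) * ((ℓ'+1).choose (i+1+1) : Cp)‖ := norm_neg _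
        _ ≤ ‖t‖ ^ 2 := hrhs
    have htpos : 0 < ‖t‖ := norm_pos_iff.mpr ht0
    nlinarith [htle, htpos]
  -- construct the finset
  refine ⟨(Finset.range ℓ).image (fun j => ζ ^ j), ?_, ?_, ?_⟩
  · rw [Finset.card_image_of_injOn, Finset.card_range]
    · exact hℓm
    · intro i hi j hj hij
      exact hζ.pow_inj (Finset.mem_range.mp hi) (Finset.mem_range.mp hj) hij
  · intro x hx
    obtain ⟨j, _, rfl⟩ := Finset.mem_image.mp hx
    rw [norm_pow, hζnorm, one_pow]
  · intro x hx y hy hxy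
    obtain ⟨i, hi, rfl⟩ := Finset.mem_image.mp hx
    obtain ⟨j, hj, rfl⟩ := Finset.mem_image.mp hy
    rw [Finset.mem_range] at hi hj
    rcases lt_trichotomy i j with hij | rfl | hij
    · rw [norm_sub_rev]
      have : ζ ^ j - ζ ^ i = ζ ^ i * (ζ ^ (j - i) - 1) := by
        rw [mul_sub, mul_one, ← pow_add]
        congr 2
        omega
      rw [this, norm_mul, norm_pow, hζnorm, one_pow, one_mul]
      exact key (j - i) (by omega) (by omega)
    · exact absurd rfl hxy
    · have : ζ ^ i - ζ ^ j = ζ ^ j * (ζ ^ (i - j) - 1) := by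
        rw [mul_sub, mul_one, ← pow_add]
        congr 2
        omega
      rw [this, norm_mul, norm_pow, hζnorm, one_pow, one_mul]
      exact key (i - j) (by omega) (by omega)

open Polynomial in
lemma coeff_eq_zero_of_poly_growth {K : Type} [NontriviallyNormedField K] [IsUltrametricDist K]
    (hnodes : ∀ m : ℕ, ∃ s : Finset K, m < s.card ∧ (∀ x ∈ s, ‖x‖ = 1) ∧
      ∀ x ∈ s, ∀ y ∈ s, x ≠ y → ‖x - y‖ = 1)
    (a : ℕ → K) (hconv : ∀ z : K, Summable fun k => a k * z ^ k)
    (C : ℝ) (hC : 0 ≤ C) (N : ℕ) (R₀ : ℝ)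
    (hgrow : ∀ z : K, R₀ ≤ ‖z‖ → ‖∑' k, a k * z ^ k‖ ≤ C * ‖z‖ ^ N)
    (n : ℕ) (hn : N < n) : a n = 0 := by
  classical
  have main : ∀ c₀ : K, max R₀ 1 ≤ ‖c₀‖ → ‖a n‖ * ‖c₀‖ ^ n ≤ C * ‖c₀‖ ^ N := by
    intro c₀ hc₀
    have hr1 : (1:ℝ) ≤ ‖c₀‖ := le_trans (le_max_right _ _) hc₀
    have hrpos : (0:ℝ) < ‖c₀‖ := lt_of_lt_of_le one_pos hr1
    have hc₀0 : c₀ ≠ 0 := norm_pos_iff.mp hrpos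
    set r := ‖c₀‖ with hr
    refine le_of_forall_pos_le_add ?_
    intro ε hε
    -- tail cutoff
    have htend : Filter.Tendsto (fun k => ‖a k * c₀ ^ k‖) Filter.atTop (nhds 0) := by
      simpa using ((hconv c₀).tendsto_atTop_zero).norm
    obtain ⟨m₀, hm₀⟩ := Filter.eventually_atTop.mp (htend.eventually (gt_mem_nhds hε))
    set m := max n m₀ with hm
    obtain ⟨s, hcard, hnorm1, hdist⟩ := hnodes m
    set v : K → K := fun x => c₀ * x with hv
    have hvinj : Set.InjOn v s := fun x _ y _ h => mul_left_cancel₀ hc₀0 h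
    have hvnorm : ∀ x ∈ s, ‖v x‖ = r := by
      intro x hx
      rw [hv]
      simp only [norm_mul, hnorm1 x hx, mul_one]
      rfl
    set P : Polynomial K := ∑ k ∈ Finset.range (m+1), Polynomial.C (a k) * Polynomial.X ^ k
      with hP
    have hPcoeff : ∀ j, P.coeff j = if j < m + 1 then a j else 0 := by
      intro j
      rw [hP, Polynomial.finset_sum_coeff]
      simp only [Polynomial.coeff_C_mul, Polynomial.coeff_X_pow, mul_ite, mul_one, mul_zero]
      rw [Finset.sum_ite_eq (Finset.range (m+1)) j (fun k => a k)]
      simp [Finset.mem_range]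
    have hPdeg : P.degree < (s.card : WithBot ℕ) := by
      have h1 : P.degree < ((m+1 : ℕ) : WithBot ℕ) := by
        rw [Polynomial.degree_lt_iff_coeff_zero]
        intro j hj
        rw [hPcoeff j, if_neg]
        exact fun hlt => absurd (Nat.cast_lt.mpr hlt) (not_lt.mpr hj)
      exact lt_of_lt_of_le h1 (Nat.cast_le.mpr hcard)
    have hPeval : ∀ x ∈ s, ‖P.eval (v x)‖ ≤ C * r ^ N + ε := by
      intro x hx
      have hsplit := (hconv (v x)).sum_add_tsum_nat_add (m+1)
      have hPev : P.eval (v x) = ∑ k ∈ Finset.range (m+1), a k * (v x) ^ k := by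
        rw [hP]
        simp [Polynomial.eval_finset_sum]
      have heq : P.eval (v x)
          = (∑' k, a k * (v x) ^ k) - ∑' i, a (i+(m+1)) * (v x) ^ (i+(m+1)) := by
        rw [hPev, ← hsplit]
        ring
      rw [heq]
      refine (norm_sub_le _ _).trans (add_le_add ?_ ?_)
      · have := hgrow (v x) (by rw [hvnorm x hx]; exact le_trans (le_max_left _ _) hc₀)
        rwa [hvnorm x hx] at this
      · refine IsUltrametricDist.norm_tsum_le_of_forall_le_of_nonneg hε.le fun i => ?_
        have hik : m₀ ≤ i + (m + 1) := by
          have : m₀ ≤ m := le_max_right n m₀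
          omega
        have := hm₀ (i + (m+1)) hik
        have hnorms : ‖a (i+(m+1)) * (v x) ^ (i+(m+1))‖ = ‖a (i+(m+1)) * c₀ ^ (i+(m+1))‖ := by
          rw [norm_mul, norm_mul, norm_pow, norm_pow, hvnorm x hx]
        rw [hnorms]
        exact this.le
    have hbasis : ∀ x ∈ s, ‖(Lagrange.basis s v x).coeff n‖ * r ^ n ≤ 1 := by
      intro x hx
      have hb : Lagrange.basis s v x
          = Polynomial.C (∏ y ∈ s.erase x, (v x - v y)⁻¹)
            * ∏ y ∈ s.erase x, (Polynomial.X - Polynomial.C (v y)) := by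
        rw [Lagrange.basis]
        simp only [Lagrange.basisDivisor]
        rw [Finset.prod_mul_distrib, ← map_prod]
      have hdists : ∀ y ∈ s.erase x, ‖v x - v y‖ = r := by
        intro y hy
        have hys : y ∈ s := Finset.mem_of_mem_erase hy
        have hyx : x ≠ y := (Finset.ne_of_mem_erase hy).symm
        have : v x - v y = c₀ * (x - y) := by rw [hv]; ring
        rw [this, norm_mul, hdist x hx y hys hyx, mul_one]
      have hprodinv : ‖∏ y ∈ s.erase x, (v x - v y)⁻¹‖ = (r ^ (s.erase x).card)⁻¹ := by
        rw [norm_prod]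
        rw [Finset.prod_congr rfl (fun y hy => by rw [norm_inv, hdists y hy])]
        rw [Finset.prod_const, inv_pow]
      have hprodbound : ‖(∏ y ∈ s.erase x, (Polynomial.X - Polynomial.C (v y))).coeff n‖ * r ^ n
          ≤ r ^ (s.erase x).card := by
        have himg : ∏ y ∈ s.erase x, (Polynomial.X - Polynomial.C (v y))
            = ∏ z ∈ (s.erase x).image v, (Polynomial.X - Polynomial.C z) := by
          rw [Finset.prod_image]
          intro y hy y' hy' h
          exact hvinj (Finset.mem_of_mem_erase hy) (Finset.mem_of_mem_erase hy') h
        have hcardimg : ((s.erase x).image v).card = (s.erase x).card :=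
          Finset.card_image_of_injOn fun y hy y' hy' h =>
            hvinj (Finset.mem_of_mem_erase hy) (Finset.mem_of_mem_erase hy') h
        rw [himg, ← hcardimg]
        refine prod_linear_coeff_bound hrpos _ (fun z hz => ?_) n
        obtain ⟨y, hy, rfl⟩ := Finset.mem_image.mp hz
        rw [hvnorm y (Finset.mem_of_mem_erase hy)]
      rw [hb, Polynomial.coeff_C_mul, norm_mul, hprodinv]
      calc (r ^ (s.erase x).card)⁻¹
            * ‖(∏ y ∈ s.erase x, (Polynomial.X - Polynomial.C (v y))).coeff n‖ * r ^ n
          = (r ^ (s.erase x).card)⁻¹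
            * (‖(∏ y ∈ s.erase x, (Polynomial.X - Polynomial.C (v y))).coeff n‖ * r ^ n) := by
            ring
        _ ≤ (r ^ (s.erase x).card)⁻¹ * r ^ (s.erase x).card := by
            refine mul_le_mul_of_nonneg_left hprodbound (by positivity)
        _ = 1 := by field_simp
    -- interpolation
    have hI := Lagrange.eq_interpolate hvinj hPdeg
    have hcoeffI : a n = ∑ x ∈ s, P.eval (v x) * (Lagrange.basis s v x).coeff n := by
      have h1 : a n = P.coeff n := by
        rw [hPcoeff n, if_pos]
        omega
      rw [h1]
      conv_lhs => rw [hI]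
      rw [Lagrange.interpolate_apply, Polynomial.finset_sum_coeff]
      exact Finset.sum_congr rfl fun x _ => by rw [Polynomial.coeff_C_mul]
    have hnormsum : ‖a n‖ ≤ (C * r ^ N + ε) / r ^ n := by
      rw [hcoeffI]
      refine IsUltrametricDist.norm_sum_le_of_forall_le_of_nonneg (by positivity) fun x hx => ?_
      rw [norm_mul]
      have h1 := hPeval x hx
      have h2 : ‖(Lagrange.basis s v x).coeff n‖ ≤ 1 / r ^ n := by
        rw [le_div_iff₀ (by positivity)]
        exact hbasis x hx
      calc ‖P.eval (v x)‖ * ‖(Lagrange.basis s v x).coeff n‖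
          ≤ (C * r ^ N + ε) * (1 / r ^ n) := by
            refine mul_le_mul h1 h2 (norm_nonneg _) (by positivity)
        _ = (C * r ^ N + ε) / r ^ n := by ring
    calc ‖a n‖ * r ^ n ≤ ((C * r ^ N + ε) / r ^ n) * r ^ n :=
          mul_le_mul_of_nonneg_right hnormsum (by positivity)
      _ = C * r ^ N + ε := by field_simp
  -- conclude
  by_contra han
  have hapos : 0 < ‖a n‖ := norm_pos_iff.mpr han
  obtain ⟨c₀, hc₀⟩ := NormedField.exists_lt_norm K (max (max R₀ 1) (C / ‖a n‖))
  have hge : max R₀ 1 ≤ ‖c₀‖ := le_of_lt (lt_of_le_of_lt (le_max_left _ _) hc₀)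
  have hr1 : (1:ℝ) ≤ ‖c₀‖ := le_trans (le_max_right _ _) hge
  have hrpos : (0:ℝ) < ‖c₀‖ := lt_of_lt_of_le one_pos hr1
  have hmain := main c₀ hge
  have hpow : ‖c₀‖ ^ (N+1) ≤ ‖c₀‖ ^ n := pow_le_pow_right₀ hr1 hn
  have hCr : C < ‖a n‖ * ‖c₀‖ := by
    have : C / ‖a n‖ < ‖c₀‖ := lt_of_le_of_lt (le_max_right _ _) hc₀
    rw [div_lt_iff₀ hapos] at this
    linarith [this]
  have hNpos : (0:ℝ) < ‖c₀‖ ^ N := by positivity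
  have h1 : ‖a n‖ * (‖c₀‖ ^ N * ‖c₀‖) ≤ C * ‖c₀‖ ^ N := by
    calc ‖a n‖ * (‖c₀‖ ^ N * ‖c₀‖) = ‖a n‖ * ‖c₀‖ ^ (N+1) := by ring
      _ ≤ ‖a n‖ * ‖c₀‖ ^ n := mul_le_mul_of_nonneg_left hpow (norm_nonneg _)
      _ ≤ C * ‖c₀‖ ^ N := hmain
  nlinarith [h1, hCr, hNpos, hapos]

noncomputable def toBiv (K : Type) [CommRing K] :
    MvPolynomial (Fin 2) K →+* Polynomial (Polynomial K) :=
  (MvPolynomial.aeval (R := K)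
    ![(Polynomial.C Polynomial.X : Polynomial (Polynomial K)),
      (Polynomial.X : Polynomial (Polynomial K))]).toRingHom

lemma toBiv_injective (K : Type) [CommRing K] : Function.Injective (toBiv K) := by
  classical
  set Θ : Polynomial (Polynomial K) →+* MvPolynomial (Fin 2) K :=
    Polynomial.eval₂RingHom
      (Polynomial.eval₂RingHom (MvPolynomial.C) (MvPolynomial.X 0))
      (MvPolynomial.X 1) with hΘ
  have hleft : ∀ P, Θ (toBiv K P) = P := by
    have : Θ.comp (toBiv K) = RingHom.id _ := by
      apply MvPolynomial.ringHom_ext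
      · intro r
        simp [toBiv, hΘ]
      · intro i
        fin_cases i <;> simp [toBiv, hΘ]
    intro P
    exact DFunLike.congr_fun this P
  intro P Q h
  rw [← hleft P, ← hleft Q, h]

lemma toBiv_eval (K : Type) [CommRing K] (P : MvPolynomial (Fin 2) K) (z w : K) :
    MvPolynomial.eval ![z, w] P
      = Polynomial.eval w ((toBiv K P).map (Polynomial.evalRingHom z)) := by
  have : (MvPolynomial.eval ![z, w])
      = ((Polynomial.evalRingHom w).comp
          ((Polynomial.mapRingHom (Polynomial.evalRingHom z)).comp (toBiv K))) := by
    apply MvPolynomial.ringHom_ext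
    · intro r
      simp [toBiv]
    · intro i
      fin_cases i <;> simp [toBiv]
  exact DFunLike.congr_fun this P


/-- A p-adic entire function `f : ℂ_p → ℂ_p` (given by an everywhere-convergent power
series) is algebraic over `ℂ_p[z]` if and only if it is a polynomial function. -/
theorem entire_algebraic_iff_polynomial {p : ℕ} [Fact p.Prime]
    (Cp : Type) [NontriviallyNormedField Cp] [IsUltrametricDist Cp] [CompleteSpace Cp]
    [IsAlgClosed Cp] [CharZero Cp] [Algebra ℚ_[p] Cp]
    (hisom : ∀ x : ℚ_[p], ‖algebraMap ℚ_[p] Cp x‖ = ‖x‖)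
    (hdense : Dense {x : Cp | IsAlgebraic ℚ_[p] x})
    (a : ℕ → Cp) (hconv : ∀ z : Cp, Summable fun n => a n * z ^ n)
    (F : Cp → Cp) (hF : ∀ z : Cp, F z = ∑' n, a n * z ^ n) :
    (∃ P : MvPolynomial (Fin 2) Cp, P ≠ 0 ∧ ∀ z : Cp, MvPolynomial.eval ![z, F z] P = 0)
      ↔ ∃ Q : Polynomial Cp, ∀ z : Cp, F z = Q.eval z := by
  classical
  have keyeval : ∀ (v : Fin 2 → Cp) (Q : Polynomial Cp),
      MvPolynomial.eval v (Polynomial.aeval (MvPolynomial.X 0) Q) = Polynomial.eval (v 0) Q := by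
    intro v Q
    rw [Polynomial.aeval_def, Polynomial.hom_eval₂]
    have h1 : (MvPolynomial.eval v).comp (algebraMap Cp (MvPolynomial (Fin 2) Cp))
        = RingHom.id Cp := by
      ext r
      simp [MvPolynomial.algebraMap_eq]
    rw [h1]
    simp [Polynomial.eval₂_eq_eval_map]
  constructor
  · rintro ⟨P, hP0, hPz⟩
    -- convert to a polynomial in two steps
    set q : Polynomial (Polynomial Cp) := toBiv Cp P with hq
    have hq0 : q ≠ 0 := by
      intro h
      exact hP0 (toBiv_injective Cp (by rw [← hq, h, map_zero]))
    set d := q.natDegree with hd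
    have hrel : ∀ z : Cp,
        ∑ i ∈ Finset.range (d+1), (q.coeff i).eval z * (F z) ^ i = 0 := by
      intro z
      have h1 := toBiv_eval Cp P z (F z)
      rw [hPz z] at h1
      have hlt : (q.map (Polynomial.evalRingHom z)).natDegree < d + 1 :=
        Nat.lt_succ_of_le Polynomial.natDegree_map_le
      rw [Polynomial.eval_eq_sum_range' hlt] at h1
      have h2 : ∑ i ∈ Finset.range (d+1), (q.coeff i).eval z * (F z) ^ i
          = ∑ i ∈ Finset.range (d+1),
              (q.map (Polynomial.evalRingHom z)).coeff i * (F z) ^ i := by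
        refine Finset.sum_congr rfl fun i _ => ?_
        simp [Polynomial.coeff_map]
      rw [h2, ← h1]
    have hd1 : 1 ≤ d := by
      by_contra hcon
      have hd0 : d = 0 := by omega
      have hzero : q.coeff 0 = 0 := by
        apply Polynomial.funext
        intro z
        have := hrel z
        rw [hd0] at this
        simpa using this
      apply hq0
      have hq' : q = Polynomial.C (q.coeff 0) :=
        Polynomial.eq_C_of_natDegree_eq_zero (by rw [← hd]; exact hd0)
      rw [hq', hzero, map_zero]
    -- growth bound for F
    have hcd0 : q.coeff d ≠ 0 := by
      rw [hd]
      exact Polynomial.leadingCoeff_ne_zero.mpr hq0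
    obtain ⟨L, hL, R₁, hR₁, hlow⟩ := eval_norm_ge (q.coeff d) hcd0
    set Dd := (q.coeff d).natDegree with hDd
    set N := Finset.sup (Finset.range (d+1)) (fun i => (q.coeff i).natDegree) with hN
    set B := ∑ i ∈ Finset.range d,
      (∑ j ∈ Finset.range (N+1), ‖(q.coeff i).coeff j‖) with hB
    have hBnn : 0 ≤ B :=
      Finset.sum_nonneg fun i _ => Finset.sum_nonneg fun j _ => norm_nonneg _
    set C₀ : ℝ := max 1 (B / L) with hC₀
    have hC₀nn : (0:ℝ) ≤ C₀ := le_trans zero_le_one (le_max_left _ _)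
    have hgrow : ∀ z : Cp, max R₁ 1 ≤ ‖z‖ → ‖F z‖ ≤ C₀ * ‖z‖ ^ N := by
      intro z hz
      have hz1 : (1:ℝ) ≤ ‖z‖ := le_trans (le_max_right _ _) hz
      have hzN : (1:ℝ) ≤ ‖z‖ ^ N := one_le_pow₀ hz1
      set w := F z with hw
      rcases le_or_gt ‖w‖ 1 with hwle | hwgt
      · calc ‖w‖ ≤ 1 := hwle
          _ ≤ C₀ * ‖z‖ ^ N := by
            have h1 : (1:ℝ) ≤ C₀ := le_max_left _ _
            nlinarith
      · have hrelz := hrel z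
        rw [Finset.sum_range_succ] at hrelz
        have heq : (q.coeff d).eval z * w ^ d
            = -∑ i ∈ Finset.range d, (q.coeff i).eval z * w ^ i := by
          linear_combination hrelz
        have hnle : ‖(q.coeff d).eval z‖ * ‖w‖ ^ d ≤ B * ‖z‖ ^ N * ‖w‖ ^ (d-1) := by
          rw [← norm_pow, ← norm_mul, heq, norm_neg]
          refine (norm_sum_le _ _).trans ?_
          rw [hB, Finset.sum_mul, Finset.sum_mul]
          refine Finset.sum_le_sum fun i hi => ?_
          rw [norm_mul, norm_pow]
          have hiN : (q.coeff i).natDegree ≤ N := by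
            rw [hN]
            exact Finset.le_sup (f := fun i => (q.coeff i).natDegree)
              (Finset.mem_range.mpr (lt_trans (Finset.mem_range.mp hi) (Nat.lt_succ_self d)))
          have h1 := eval_norm_le (q.coeff i) N hiN z hz1
          have h2 : ‖w‖ ^ i ≤ ‖w‖ ^ (d-1) := by
            refine pow_le_pow_right₀ hwgt.le ?_
            have := Finset.mem_range.mp hi
            omega
          calc ‖(q.coeff i).eval z‖ * ‖w‖ ^ i
              ≤ ((∑ j ∈ Finset.range (N+1), ‖(q.coeff i).coeff j‖) * ‖z‖ ^ N) * ‖w‖ ^ (d-1) := by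
                refine mul_le_mul h1 h2 (by positivity) (by positivity)
            _ = (∑ j ∈ Finset.range (N+1), ‖(q.coeff i).coeff j‖) * ‖z‖ ^ N * ‖w‖ ^ (d-1) := by
                ring
        have hlowz := hlow z (le_trans (le_max_left _ _) hz)
        have hcd : L ≤ ‖(q.coeff d).eval z‖ := by
          have h1 : (1:ℝ) ≤ ‖z‖ ^ Dd := one_le_pow₀ hz1
          nlinarith
        have hwpos : (0:ℝ) < ‖w‖ ^ (d-1) := by positivity
        have hsplit : ‖w‖ ^ d = ‖w‖ ^ (d-1) * ‖w‖ := by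
          rw [← pow_succ]
          congr 1
          omega
        have hLw : L * ‖w‖ ≤ B * ‖z‖ ^ N := by
          have e1 : L * ‖w‖ * ‖w‖ ^ (d-1) ≤ (B * ‖z‖ ^ N) * ‖w‖ ^ (d-1) := by
            calc L * ‖w‖ * ‖w‖ ^ (d-1) = L * (‖w‖ ^ (d-1) * ‖w‖) := by ring
              _ ≤ ‖(q.coeff d).eval z‖ * (‖w‖ ^ (d-1) * ‖w‖) := by
                  refine mul_le_mul_of_nonneg_right hcd (by positivity)
              _ = ‖(q.coeff d).eval z‖ * ‖w‖ ^ d := by rw [hsplit]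
              _ ≤ B * ‖z‖ ^ N * ‖w‖ ^ (d-1) := hnle
          exact le_of_mul_le_mul_right e1 hwpos
        calc ‖w‖ ≤ (B / L) * ‖z‖ ^ N := by
              rw [div_mul_eq_mul_div, le_div_iff₀ hL]
              linarith [hLw]
          _ ≤ C₀ * ‖z‖ ^ N := by
              refine mul_le_mul_of_nonneg_right (le_max_right _ _) (by positivity)
    -- apply Liouville
    have hvanish : ∀ k, N < k → a k = 0 := by
      intro k hk
      refine coeff_eq_zero_of_poly_growth (exists_nodes Cp hisom) a hconv C₀ hC₀nn N
        (max R₁ 1) (fun z hz => ?_) k hk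
      rw [← hF z]
      exact hgrow z hz
    refine ⟨∑ k ∈ Finset.range (N+1), Polynomial.C (a k) * Polynomial.X ^ k, fun z => ?_⟩
    rw [hF z]
    rw [tsum_eq_sum (s := Finset.range (N+1)) (fun k hk => ?_)]
    · simp [Polynomial.eval_finset_sum]
    · rw [hvanish k (by simpa using hk), zero_mul]
  · rintro ⟨Q, hQ⟩
    refine ⟨MvPolynomial.X 1 - Polynomial.aeval (MvPolynomial.X 0) Q, ?_, ?_⟩
    · intro h
      have h1 := congrArg (MvPolynomial.eval ![0, Polynomial.eval 0 Q + 1]) h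
      rw [map_zero, map_sub, MvPolynomial.eval_X, keyeval] at h1
      simp at h1
    · intro z
      rw [map_sub, MvPolynomial.eval_X, keyeval]
      simp [hQ z]
end

section
/- A p-adic entire function f : ℂ_p → ℂ_p with only finitely many zeros is a polynomial function. -/
open Polynomial

attribute [local instance] Classical.propDecidable

namespace EFZP

variable {K : Type*} [NontriviallyNormedField K] [IsUltrametricDist K]

lemma add_norm_eq_left {x y : K} (h : ‖y‖ < ‖x‖) : ‖x + y‖ = ‖x‖ := by
  rw [IsUltrametricDist.norm_add_eq_max_of_norm_ne_norm (ne_of_gt h)]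
  exact max_eq_left h.le

lemma sub_norm_eq_right {x y : K} (h : ‖x‖ < ‖y‖) : ‖x - y‖ = ‖y‖ := by
  rw [sub_eq_add_neg, IsUltrametricDist.norm_add_eq_max_of_norm_ne_norm (by rw [norm_neg]; exact ne_of_lt h)]
  rw [norm_neg]
  exact max_eq_right h.le

lemma norm_sub_le_max (x y : K) : ‖x - y‖ ≤ max ‖x‖ ‖y‖ := by
  rw [sub_eq_add_neg]
  simpa [norm_neg] using IsUltrametricDist.norm_add_le_max x (-y)

lemma norm_sum_eq_dominant {s : Finset ℕ} {f : ℕ → K} {N : ℕ} (hN : N ∈ s)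
    (h : ∀ j ∈ s, j ≠ N → ‖f j‖ < ‖f N‖) : ‖∑ j ∈ s, f j‖ = ‖f N‖ := by
  rw [← Finset.add_sum_erase _ _ hN]
  rcases (s.erase N).eq_empty_or_nonempty with he | he
  · simp [he]
  · refine add_norm_eq_left ?_
    refine lt_of_le_of_lt (he.norm_sum_le_sup'_norm f) ?_
    rw [Finset.sup'_lt_iff]
    intro j hj
    exact h j (Finset.mem_of_mem_erase hj) (Finset.ne_of_mem_erase hj)

lemma norm_multiset_prod (s : Multiset K) : ‖s.prod‖ = (s.map fun x => ‖x‖).prod := by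
  induction s using Multiset.induction_on with
  | empty => simp
  | cons a s ih => simp [norm_mul, ih]

lemma pow_card_le_prod_of_le (s : Multiset ℝ) (c : ℝ) (hc : 0 ≤ c) (h : ∀ x ∈ s, c ≤ x) :
    c ^ Multiset.card s ≤ s.prod := by
  induction s using Multiset.induction_on with
  | empty => simp
  | cons a s ih =>
    rw [Multiset.card_cons, Multiset.prod_cons, pow_succ, mul_comm (c ^ Multiset.card s) c]
    have ha := h a (Multiset.mem_cons_self a s)
    exact mul_le_mul ha (ih fun x hx => h x (Multiset.mem_cons_of_mem hx))
      (pow_nonneg hc _) (hc.trans ha)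

lemma coeff_linear_mul (α : K) (Q : K[X]) (j : ℕ) :
    ((X - C α) * Q).coeff j = (if j = 0 then 0 else Q.coeff (j - 1)) - α * Q.coeff j := by
  cases j with
  | zero => simp [Polynomial.mul_coeff_zero]
  | succ j =>
    rw [mul_comm, Polynomial.coeff_mul_X_sub_C]
    simp [mul_comm]

lemma exists_max_attainer {u : ℕ → ℝ} (hu : Filter.Tendsto u Filter.atTop (nhds 0)) {n0 : ℕ}
    (h0 : 0 < u n0) :
    ∃ N, u n0 ≤ u N ∧ (∀ j, u j ≤ u N) ∧ ∀ j, N < j → u j < u N := by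
  obtain ⟨K, hK⟩ := (Filter.tendsto_atTop'.mp hu) (Set.Iio (u n0)) (Iio_mem_nhds h0)
  set K' := max K (n0 + 1) with hK'
  have hn0K' : n0 ∈ Finset.range K' := by
    simp only [Finset.mem_range]
    omega
  have hbig : ∀ j, K' ≤ j → u j < u n0 := fun j hj => hK j (le_trans (le_max_left _ _) hj)
  obtain ⟨b, hb, hbmax⟩ := Finset.exists_max_image (Finset.range K') u ⟨n0, hn0K'⟩
  set A := (Finset.range K').filter (fun j => ∀ i ∈ Finset.range K', u i ≤ u j) with hA
  have hAne : A.Nonempty := ⟨b, by simp only [hA, Finset.mem_filter]; exact ⟨hb, hbmax⟩⟩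
  set N := A.max' hAne with hN
  have hNA : N ∈ A := A.max'_mem hAne
  rw [hA, Finset.mem_filter] at hNA
  have hNtop : ∀ i ∈ Finset.range K', u i ≤ u N := hNA.2
  have hglob : ∀ j, u j ≤ u N := by
    intro j
    by_cases hj : j ∈ Finset.range K'
    · exact hNtop j hj
    · simp only [Finset.mem_range, not_lt] at hj
      exact le_trans (hbig j hj).le (hNtop n0 hn0K')
  refine ⟨N, hNtop n0 hn0K', hglob, ?_⟩
  intro j hj
  refine lt_of_le_of_ne (hglob j) ?_
  intro heq
  by_cases hjr : j ∈ Finset.range K'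
  · have hjA : j ∈ A := by
      rw [hA, Finset.mem_filter]
      exact ⟨hjr, fun i hi => (hNtop i hi).trans heq.ge⟩
    exact absurd (Finset.le_max' A j hjA) (by omega)
  · simp only [Finset.mem_range, not_lt] at hjr
    have := hbig j hjr
    have h2 := hNtop n0 hn0K'
    rw [heq] at this
    linarith

lemma prod_map_max_pos {r : ℝ} (hr : 0 < r) (s : Multiset K) :
    0 < (s.map fun α => max r ‖α‖).prod := by
  refine Multiset.prod_pos ?_
  intro x hx
  obtain ⟨α, _, rfl⟩ := Multiset.mem_map.mp hx
  exact lt_of_lt_of_le hr (le_max_left _ _)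

lemma gauss {r : ℝ} (hr : 0 < r) (s : Multiset K) (hs : ∀ α ∈ s, ‖α‖ ≠ r) :
    (∀ j, ‖((s.map fun α => X - C α).prod).coeff j‖ * r ^ j ≤ (s.map fun α => max r ‖α‖).prod) ∧
      ‖((s.map fun α => X - C α).prod).coeff (Multiset.card (s.filter fun α => ‖α‖ < r))‖ *
          r ^ (Multiset.card (s.filter fun α => ‖α‖ < r)) = (s.map fun α => max r ‖α‖).prod := by
  induction s using Multiset.induction_on with
  | empty =>
    constructor
    · intro j
      cases j with
      | zero => simp
      | succ j =>
        simp only [Multiset.map_zero, Multiset.prod_zero, Polynomial.coeff_one]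
        rw [if_neg (by omega)]
        simp only [norm_zero, zero_mul]
        exact zero_le_one
    · simp
  | cons α s ih =>
    have hα := hs α (Multiset.mem_cons_self α s)
    obtain ⟨ih1, ih2⟩ := ih (fun β hβ => hs β (Multiset.mem_cons_of_mem hβ))
    set Q := (s.map fun α => X - C α).prod with hQ
    set G := (s.map fun α => max r ‖α‖).prod with hG
    set t := Multiset.card (s.filter fun α => ‖α‖ < r) with ht
    clear_value t
    have hGpos : 0 < G := prod_map_max_pos hr s
    rw [Multiset.map_cons, Multiset.prod_cons, Multiset.map_cons, Multiset.prod_cons,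
        Multiset.filter_cons]
    have key1 : ∀ j, ‖((X - C α) * Q).coeff j‖ * r ^ j ≤ max r ‖α‖ * G := by
      intro j
      rw [coeff_linear_mul]
      cases j with
      | zero =>
        simp only [eq_self_iff_true, if_true, zero_sub, norm_neg, pow_zero, mul_one, norm_mul]
        calc ‖α‖ * ‖Q.coeff 0‖ ≤ ‖α‖ * G := by
              have h0 := ih1 0
              rw [pow_zero, mul_one] at h0
              exact mul_le_mul_of_nonneg_left h0 (norm_nonneg α)
          _ ≤ max r ‖α‖ * G := mul_le_mul_of_nonneg_right (le_max_right r ‖α‖) hGpos.le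
      | succ j =>
        rw [if_neg (by omega), Nat.succ_sub_one]
        refine le_trans (mul_le_mul_of_nonneg_right (norm_sub_le_max _ _)
          (by positivity : (0:ℝ) ≤ r ^ (j + 1))) ?_
        rw [max_mul_of_nonneg _ _ (by positivity : (0:ℝ) ≤ r ^ (j + 1))]
        refine max_le ?_ ?_
        · calc ‖Q.coeff j‖ * r ^ (j + 1) = ‖Q.coeff j‖ * r ^ j * r := by ring
            _ ≤ G * r := mul_le_mul_of_nonneg_right (ih1 j) hr.le
            _ = r * G := mul_comm _ _
            _ ≤ max r ‖α‖ * G := mul_le_mul_of_nonneg_right (le_max_left _ _) hGpos.le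
        · rw [norm_mul]
          calc ‖α‖ * ‖Q.coeff (j + 1)‖ * r ^ (j + 1)
              = ‖α‖ * (‖Q.coeff (j + 1)‖ * r ^ (j + 1)) := by ring
            _ ≤ ‖α‖ * G := mul_le_mul_of_nonneg_left (ih1 (j + 1)) (norm_nonneg α)
            _ ≤ max r ‖α‖ * G := mul_le_mul_of_nonneg_right (le_max_right _ _) hGpos.le
    refine ⟨key1, ?_⟩
    rcases lt_or_gt_of_ne hα with hlt | hgt
    · -- ‖α‖ < r
      rw [if_pos hlt, max_eq_left hlt.le]
      have hcard : Multiset.card ({α} + Multiset.filter (fun β => ‖β‖ < r) s) = t + 1 := by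
        simp [ht, add_comm]
      rw [hcard, coeff_linear_mul, if_neg (by omega), Nat.add_sub_cancel]
      have h2 : ‖α * Q.coeff (t + 1)‖ < ‖Q.coeff t‖ := by
        have hb : ‖α * Q.coeff (t + 1)‖ * r ^ (t + 1) < ‖Q.coeff t‖ * r ^ (t + 1) := by
          rw [norm_mul]
          calc ‖α‖ * ‖Q.coeff (t + 1)‖ * r ^ (t + 1)
              = ‖α‖ * (‖Q.coeff (t + 1)‖ * r ^ (t + 1)) := by ring
            _ ≤ ‖α‖ * G := mul_le_mul_of_nonneg_left (ih1 (t + 1)) (norm_nonneg α)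
            _ < r * G := by
                exact mul_lt_mul_of_pos_right hlt hGpos
            _ = ‖Q.coeff t‖ * r ^ (t + 1) := by rw [pow_succ, ← ih2]; ring
        exact lt_of_mul_lt_mul_right hb (by positivity)
      have h3 : ‖Q.coeff t - α * Q.coeff (t + 1)‖ = ‖Q.coeff t‖ := by
        rw [sub_eq_add_neg, add_norm_eq_left (by rwa [norm_neg])]
      rw [h3, pow_succ, ← mul_assoc, ih2]
      ring
    · -- r < ‖α‖
      rw [if_neg (not_lt.mpr hgt.le), max_eq_right hgt.le]
      have hcard : Multiset.card ((0 : Multiset K) + Multiset.filter (fun β => ‖β‖ < r) s) = t := by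
        simp [ht]
      rw [hcard, coeff_linear_mul]
      cases t with
      | zero =>
        simp only [eq_self_iff_true, if_true, zero_sub, norm_neg, pow_zero, mul_one, norm_mul]
        have h0 : ‖Q.coeff 0‖ = G := by simpa using ih2
        rw [h0]
      | succ t' =>
        rw [if_neg (by omega), Nat.add_sub_cancel]
        have hc2 : ‖Q.coeff (t' + 1)‖ * r ^ (t' + 1) = G := ih2
        have hxlt : ‖Q.coeff t'‖ < ‖α * Q.coeff (t' + 1)‖ := by
          have hb : ‖Q.coeff t'‖ * r ^ (t' + 1) < ‖α * Q.coeff (t' + 1)‖ * r ^ (t' + 1) := by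
            rw [norm_mul]
            calc ‖Q.coeff t'‖ * r ^ (t' + 1) = ‖Q.coeff t'‖ * r ^ t' * r := by ring
              _ ≤ G * r := mul_le_mul_of_nonneg_right (ih1 t') hr.le
              _ < G * ‖α‖ := mul_lt_mul_of_pos_left hgt hGpos
              _ = ‖α‖ * (‖Q.coeff (t' + 1)‖ * r ^ (t' + 1)) := by rw [hc2]; ring
              _ = ‖α‖ * ‖Q.coeff (t' + 1)‖ * r ^ (t' + 1) := by ring
          exact lt_of_mul_lt_mul_right hb (by positivity)
        rw [sub_norm_eq_right hxlt, norm_mul]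
        calc ‖α‖ * ‖Q.coeff (t' + 1)‖ * r ^ (t' + 1)
            = ‖α‖ * (‖Q.coeff (t' + 1)‖ * r ^ (t' + 1)) := by ring
          _ = ‖α‖ * G := by rw [hc2]

lemma norm_pow_sub_pow_le (x y : K) {r : ℝ} (hx : ‖x‖ ≤ r) (hy : ‖y‖ ≤ r) (n : ℕ) :
    ‖x ^ n - y ^ n‖ ≤ ‖x - y‖ * r ^ (n - 1) := by
  have hr0 : 0 ≤ r := le_trans (norm_nonneg x) hx
  cases n with
  | zero =>
    simp only [pow_zero, sub_self, norm_zero]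
    positivity
  | succ n =>
    rw [← geom_sum₂_mul x y (n + 1), norm_mul, Nat.add_sub_cancel, mul_comm]
    refine mul_le_mul_of_nonneg_left ?_ (norm_nonneg _)
    refine IsUltrametricDist.norm_sum_le_of_forall_le_of_nonneg (by positivity) ?_
    intro i hi
    rw [Finset.mem_range] at hi
    rw [norm_mul, norm_pow, norm_pow]
    calc ‖x‖ ^ i * ‖y‖ ^ (n + 1 - 1 - i)
        ≤ r ^ i * r ^ (n + 1 - 1 - i) := by
          exact mul_le_mul (pow_le_pow_left₀ (norm_nonneg x) hx i)
            (pow_le_pow_left₀ (norm_nonneg y) hy _) (by positivity) (by positivity)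
      _ = r ^ n := by rw [← pow_add]; congr 1; omega

lemma norm_eval_prod (c : K) (s : Multiset K) (z : K) :
    ‖(C c * (s.map fun α => X - C α).prod).eval z‖ = ‖c‖ * (s.map fun α => ‖z - α‖).prod := by
  rw [eval_mul, eval_C, norm_mul, Polynomial.eval_multiset_prod]
  congr 1
  rw [norm_multiset_prod, Multiset.map_map, Multiset.map_map]
  congr 1
  apply Multiset.map_congr rfl
  intro α hα
  simp [Function.comp]

end EFZP

open EFZP in
set_option maxHeartbeats 2000000 in
/-- A p-adic entire function `f : ℂ_p → ℂ_p` with only finitely many zeros is a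
polynomial function. -/
theorem entire_finite_zeros_polynomial {p : ℕ} [Fact p.Prime]
    (Cp : Type) [NontriviallyNormedField Cp] [IsUltrametricDist Cp] [CompleteSpace Cp]
    [IsAlgClosed Cp] [CharZero Cp] [Algebra ℚ_[p] Cp]
    (hisom : ∀ x : ℚ_[p], ‖algebraMap ℚ_[p] Cp x‖ = ‖x‖)
    (hdense : Dense {x : Cp | IsAlgebraic ℚ_[p] x})
    (a : ℕ → Cp) (hconv : ∀ z : Cp, Summable fun n => a n * z ^ n)
    (F : Cp → Cp) (hF : ∀ z : Cp, F z = ∑' n, a n * z ^ n)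
    (hzeros : {z : Cp | F z = 0}.Finite) :
    ∃ Q : Polynomial Cp, ∀ z : Cp, F z = Q.eval z := by
  classical
  by_cases hfin : ∃ K0 : ℕ, ∀ n, K0 ≤ n → a n = 0
  · obtain ⟨K0, hK0⟩ := hfin
    refine ⟨∑ j ∈ Finset.range K0, Polynomial.C (a j) * Polynomial.X ^ j, fun z => ?_⟩
    rw [hF z, tsum_eq_sum (s := Finset.range K0) ?_]
    · simp [Polynomial.eval_finset_sum]
    · intro n hn
      rw [hK0 n (by simpa using hn)]
      simp
  · push_neg at hfin
    exfalso
    -- `u x n = ‖a n‖ * x ^ n` tends to `0` for every `x ≥ 0`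
    have hten : ∀ x : ℝ, 0 ≤ x → Filter.Tendsto (fun n => ‖a n‖ * x ^ n) Filter.atTop (nhds 0) := by
      intro x hx
      obtain ⟨z0, hz0⟩ := NormedField.exists_lt_norm Cp x
      have h1 : Filter.Tendsto (fun n => ‖a n * z0 ^ n‖) Filter.atTop (nhds 0) := by
        simpa using (hconv z0).tendsto_atTop_zero.norm
      refine squeeze_zero (fun n => by positivity) (fun n => ?_) h1
      rw [norm_mul, norm_pow]
      exact mul_le_mul_of_nonneg_left (pow_le_pow_left₀ hx hz0.le n) (norm_nonneg _)
    -- a strict bound on the norms of all zeros of `F`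
    obtain ⟨R, hR0, hRz⟩ : ∃ R : ℝ, 0 < R ∧ ∀ z : Cp, F z = 0 → ‖z‖ < R := by
      obtain ⟨B0, hB0⟩ := (hzeros.image (fun z => ‖z‖)).bddAbove
      have hb1 := le_max_left B0 0
      have hb2 := le_max_right B0 0
      refine ⟨max B0 0 + 1, by linarith, ?_⟩
      intro z hz
      have : ‖z‖ ≤ B0 := hB0 (Set.mem_image_of_mem _ hz)
      linarith
    -- the largest index attaining the max of `‖a n‖ R^n`
    obtain ⟨nR0, -, hnR0⟩ := hfin 0
    have h0R : 0 < ‖a nR0‖ * R ^ nR0 := by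
      have := norm_pos_iff.mpr hnR0
      positivity
    obtain ⟨NR, hNR1, hNRmax, hNRstrict⟩ := exists_max_attainer (hten R hR0.le) h0R
    -- an index `m > NR` with `a m ≠ 0`
    obtain ⟨m, hmge, hm0⟩ := hfin (NR + 1)
    have hm1 : 1 ≤ m := by omega
    -- a threshold beyond which the `m`-th term beats all lower ones
    obtain ⟨t0, ht0R, ht0⟩ : ∃ t0 : ℝ, R < t0 ∧ ∀ x : ℝ, t0 ≤ x → ∀ j, j < m →
        ‖a j‖ * x ^ j < ‖a m‖ * x ^ m := by
      have hne : (Finset.range m).Nonempty := ⟨0, Finset.mem_range.mpr hm1⟩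
      set T := (Finset.range m).sup' hne (fun j => max 1 ((‖a j‖ + 1) / ‖a m‖)) with hT
      have hT1 : (1:ℝ) ≤ T := by
        have h0m : 0 ∈ Finset.range m := Finset.mem_range.mpr hm1
        have h2 := Finset.le_sup' (fun j => max 1 ((‖a j‖ + 1) / ‖a m‖)) h0m
        exact le_trans (le_max_left _ _) h2
      refine ⟨max R T + 1, by have := le_max_left R T; linarith, ?_⟩
      intro x hx j hj
      have hxT : T ≤ x := by have := le_max_right R T; linarith
      have hx1 : (1:ℝ) ≤ x := le_trans hT1 hxT
      have hx0 : (0:ℝ) < x := by linarith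
      have ham : (0:ℝ) < ‖a m‖ := norm_pos_iff.mpr hm0
      have hxj : (‖a j‖ + 1) / ‖a m‖ ≤ x := by
        refine le_trans (le_trans (le_max_right 1 _) ?_) hxT
        exact Finset.le_sup' (fun j => max 1 ((‖a j‖ + 1) / ‖a m‖)) (Finset.mem_range.mpr hj)
      have h1 : ‖a j‖ + 1 ≤ ‖a m‖ * x := by
        rw [div_le_iff₀ ham] at hxj
        linarith [hxj]
      have hxm : x ^ m = x ^ (m - 1) * x := by
        rw [← pow_succ]
        congr 1
        omega
      calc ‖a j‖ * x ^ j < (‖a j‖ + 1) * x ^ j := by nlinarith [pow_pos hx0 j]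
        _ ≤ (‖a j‖ + 1) * x ^ (m - 1) := by
            refine mul_le_mul_of_nonneg_left (pow_le_pow_right₀ hx1 (by omega)) (by positivity)
        _ ≤ (‖a m‖ * x) * x ^ (m - 1) := mul_le_mul_of_nonneg_right h1 (by positivity)
        _ = ‖a m‖ * x ^ m := by rw [hxm]; ring
    -- a radius avoiding all ties
    obtain ⟨r, hrt0, hties⟩ : ∃ r : ℝ, t0 ≤ r ∧ ∀ i j : ℕ, i ≠ j → a i ≠ 0 → a j ≠ 0 →
        ‖a i‖ * r ^ i ≠ ‖a j‖ * r ^ j := by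
      set Bad : Set ℝ := ⋃ (i : ℕ), ⋃ (j : ℕ),
        {x : ℝ | i ≠ j ∧ a i ≠ 0 ∧ a j ≠ 0 ∧ 0 < x ∧ ‖a i‖ * x ^ i = ‖a j‖ * x ^ j} with hBad
      have key : ∀ i j : ℕ, i < j → a j ≠ 0 → ∀ x y : ℝ, 0 < x → 0 < y →
          ‖a i‖ * x ^ i = ‖a j‖ * x ^ j → ‖a i‖ * y ^ i = ‖a j‖ * y ^ j → x = y := by
        intro i j hij haj x y hx hy h1 h2
        have hjm : (0:ℝ) < ‖a j‖ := norm_pos_iff.mpr haj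
        have hsplit : ∀ w : ℝ, 0 < w → w ^ j = w ^ (j - i) * w ^ i := by
          intro w hw
          rw [← pow_add]
          congr 1
          omega
        have e1 : ‖a i‖ = ‖a j‖ * x ^ (j - i) := by
          have h1' : ‖a i‖ * x ^ i = (‖a j‖ * x ^ (j - i)) * x ^ i := by
            rw [h1, hsplit x hx]; ring
          exact mul_right_cancel₀ (by positivity) h1'
        have e2 : ‖a i‖ = ‖a j‖ * y ^ (j - i) := by
          have h2' : ‖a i‖ * y ^ i = (‖a j‖ * y ^ (j - i)) * y ^ i := by
            rw [h2, hsplit y hy]; ring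
          exact mul_right_cancel₀ (by positivity) h2'
        have e3 : x ^ (j - i) = y ^ (j - i) := by
          have := e1.symm.trans e2
          exact mul_left_cancel₀ hjm.ne' this
        exact (pow_left_strictMonoOn₀ (n := j - i) (by omega)).injOn hx.le hy.le e3
      have hcnt : Bad.Countable := by
        refine Set.countable_iUnion fun i => Set.countable_iUnion fun j => ?_
        refine Set.Subsingleton.countable ?_
        intro x hx y hy
        obtain ⟨hij, hai, haj, hx0, hxe⟩ := hx
        obtain ⟨-, -, -, hy0, hye⟩ := hy
        rcases lt_or_gt_of_ne hij with h | h
        · exact key i j h haj x y hx0 hy0 hxe hye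
        · exact key j i h hai x y hx0 hy0 hxe.symm hye.symm
      by_contra hcon
      push_neg at hcon
      have hsub : Set.Ioi (max t0 0) ⊆ Bad := by
        intro x hx
        rw [Set.mem_Ioi] at hx
        obtain ⟨i, j, h1, h2, h3, h4⟩ := hcon x (le_of_lt (lt_of_le_of_lt (le_max_left _ _) hx))
        refine Set.mem_iUnion.mpr ⟨i, Set.mem_iUnion.mpr ⟨j, h1, h2, h3, ?_, h4⟩⟩
        exact lt_of_le_of_lt (le_max_right _ _) hx
      have hinj : Function.Injective (fun x : ℝ => max t0 0 + Real.exp x) := by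
        intro x y h
        simp only [add_right_inj] at h
        exact Real.exp_injective h
      have hm : (Set.univ : Set ℝ) ⊆ (fun x : ℝ => max t0 0 + Real.exp x) ⁻¹' Bad := by
        intro x _
        simp only [Set.mem_preimage]
        refine hsub ?_
        rw [Set.mem_Ioi]
        have := Real.exp_pos x
        linarith
      exact Cardinal.not_countable_real ((hcnt.preimage hinj).mono hm)
    have hRr : R < r := lt_of_lt_of_le ht0R hrt0
    have hr0 : 0 < r := hR0.trans hRr
    -- the dominant index `N` at radius `r`
    have hmpos : 0 < ‖a m‖ * r ^ m := by
      have := norm_pos_iff.mpr hm0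
      positivity
    obtain ⟨N, hNm1, hNmax, hNstrict⟩ := exists_max_attainer (hten r hr0.le) hmpos
    have haN : a N ≠ 0 := by
      intro h
      rw [h] at hNm1
      simp only [norm_zero, zero_mul] at hNm1
      linarith
    have hmN : m ≤ N := by
      by_contra h
      push_neg at h
      exact absurd hNm1 (not_le.mpr (ht0 r hrt0 N h))
    have hN1 : 1 ≤ N := le_trans hm1 hmN
    have hNRN : NR < N := by omega
    have hdom : ∀ j, j ≠ N → ‖a j‖ * r ^ j < ‖a N‖ * r ^ N := by
      intro j hj
      rcases eq_or_ne (a j) 0 with h | h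
      · have h1 : 0 < ‖a N‖ * r ^ N := lt_of_lt_of_le hmpos hNm1
        simp [h, h1]
      · exact lt_of_le_of_ne (hNmax j) (hties j N hj h haN)
    have haNpos : 0 < ‖a N‖ := norm_pos_iff.mpr haN
    -- strict inequality at `R` persists slightly above `R`
    obtain ⟨R', hRR', hR'r, hR'lt⟩ : ∃ R' : ℝ, R < R' ∧ R' < r ∧
        ‖a N‖ * R' ^ N < ‖a NR‖ * R' ^ NR := by
      have hy : ‖a N‖ * R ^ N < ‖a NR‖ * R ^ NR := hNRstrict N hNRN
      have hev : ∀ᶠ x in nhds R, ‖a N‖ * x ^ N < ‖a NR‖ * x ^ NR := by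
        have hc1 : ContinuousAt (fun x : ℝ => ‖a N‖ * x ^ N) R := by fun_prop
        have hc2 : ContinuousAt (fun x : ℝ => ‖a NR‖ * x ^ NR) R := by fun_prop
        exact hc1.eventually_lt hc2 hy
      have h2 : ∀ᶠ x in nhdsWithin R (Set.Ioi R), ‖a N‖ * x ^ N < ‖a NR‖ * x ^ NR :=
        eventually_nhdsWithin_of_eventually_nhds hev
      have h3 : ∀ᶠ x in nhdsWithin R (Set.Ioi R), x ∈ Set.Ioo R r :=
        Ioo_mem_nhdsGT hRr
      obtain ⟨x, hx1, hx2⟩ := (h2.and h3).exists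
      exact ⟨x, hx2.1, hx2.2, hx1⟩
    have hR'0 : 0 < R' := hR0.trans hRR'
    -- the partial sums
    set P : ℕ → Polynomial Cp := fun k => ∑ j ∈ Finset.range (k + 1),
      Polynomial.C (a j) * Polynomial.X ^ j with hPdef
    have Pcoeff : ∀ k j, (P k).coeff j = if j ≤ k then a j else 0 := by
      intro k j
      rw [hPdef]
      simp only [Polynomial.finset_sum_coeff, Polynomial.coeff_C_mul, Polynomial.coeff_X_pow,
        mul_ite, mul_one, mul_zero]
      rw [Finset.sum_ite_eq (Finset.range (k + 1)) j a]
      simp [Nat.lt_succ_iff]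
    have Peval : ∀ k (z : Cp), (P k).eval z = ∑ j ∈ Finset.range (k + 1), a j * z ^ j := by
      intro k z
      rw [hPdef]
      simp [Polynomial.eval_finset_sum]
    have Pdeg : ∀ k, (P k).natDegree ≤ k := by
      intro k
      refine Polynomial.natDegree_le_iff_coeff_eq_zero.mpr fun j hj => ?_
      rw [Pcoeff k j, if_neg (by omega)]
    have Pne : ∀ k, N ≤ k → P k ≠ 0 := by
      intro k hk h
      have h2 := Pcoeff k N
      rw [h] at h2
      simp only [Polynomial.coeff_zero] at h2
      rw [if_pos hk] at h2
      exact haN h2.symm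
    set k1 := max N NR with hk1def
    -- no roots on the sphere of radius `r`
    have hsphere : ∀ k, k1 ≤ k → ∀ α ∈ (P k).roots, ‖α‖ ≠ r := by
      intro k hk α hα hcon
      have hkN : N ≤ k := le_trans (le_max_left _ _) hk
      have hroot : (P k).eval α = 0 := ((Polynomial.mem_roots (Pne k hkN)).mp hα)
      have hdom' : ∀ j ∈ Finset.range (k + 1), j ≠ N → ‖a j * α ^ j‖ < ‖a N * α ^ N‖ := by
        intro j _ hj
        rw [norm_mul, norm_pow, norm_mul, norm_pow, hcon]
        exact hdom j hj
      have hNmem : N ∈ Finset.range (k + 1) := by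
        simp only [Finset.mem_range]
        omega
      have hds := norm_sum_eq_dominant hNmem hdom'
      rw [← Peval k α, hroot] at hds
      rw [norm_zero, norm_mul, norm_pow, hcon] at hds
      have h2 : 0 < ‖a N‖ * r ^ N := lt_of_lt_of_le hmpos hNm1
      linarith
    have hfact : ∀ k, k1 ≤ k → P k = Polynomial.C (P k).leadingCoeff *
        ((P k).roots.map fun α => Polynomial.X - Polynomial.C α).prod := by
      intro k hk
      exact (IsAlgClosed.splits _).eq_prod_roots
    have hcard : ∀ k, k1 ≤ k → Multiset.card (P k).roots = (P k).natDegree := by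
      intro k hk
      exact (Polynomial.splits_iff_card_roots.mp (IsAlgClosed.splits _))
    -- main per-k facts: the number of roots inside radius `r` is `N`, and the outer product
    have hmain : ∀ k, k1 ≤ k →
        Multiset.card ((P k).roots.filter fun α => ‖α‖ < r) = N ∧
        ‖(P k).leadingCoeff‖ *
          (((P k).roots.filter fun α => ¬ ‖α‖ < r).map fun α => ‖α‖).prod = ‖a N‖ := by
      intro k hk
      have hkN : N ≤ k := le_trans (le_max_left _ _) hk
      obtain ⟨g1, g2⟩ := gauss hr0 (P k).roots (hsphere k hk)
      have hlc0 : (P k).leadingCoeff ≠ 0 := Polynomial.leadingCoeff_ne_zero.mpr (Pne k hkN)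
      have hlcpos : 0 < ‖(P k).leadingCoeff‖ := norm_pos_iff.mpr hlc0
      have hco : ∀ j, ‖(P k).coeff j‖ = ‖(P k).leadingCoeff‖ *
          ‖(((P k).roots.map fun α => Polynomial.X - Polynomial.C α).prod).coeff j‖ := by
        intro j
        conv_lhs => rw [hfact k hk]
        rw [Polynomial.coeff_C_mul, norm_mul]
      set G := ((P k).roots.map fun α => max r ‖α‖).prod with hGdef
      set t := Multiset.card ((P k).roots.filter fun α => ‖α‖ < r) with htdef
      have g2' : ‖(P k).coeff t‖ * r ^ t = ‖(P k).leadingCoeff‖ * G := by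
        rw [hco t, mul_assoc, g2]
      have g1' : ∀ j, ‖(P k).coeff j‖ * r ^ j ≤ ‖(P k).leadingCoeff‖ * G := by
        intro j
        rw [hco j, mul_assoc]
        exact mul_le_mul_of_nonneg_left (g1 j) (norm_nonneg _)
      have htk : t ≤ k := by
        rw [htdef]
        calc Multiset.card ((P k).roots.filter fun α => ‖α‖ < r)
            ≤ Multiset.card (P k).roots := Multiset.card_le_card (Multiset.filter_le _ _)
          _ = (P k).natDegree := hcard k hk
          _ ≤ k := Pdeg k
      have hteq : t = N := by
        by_contra hne
        have h1 : ‖a t‖ * r ^ t < ‖a N‖ * r ^ N := hdom t hne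
        have h2 : ‖a N‖ * r ^ N ≤ ‖(P k).leadingCoeff‖ * G := by
          have hx := g1' N
          rwa [Pcoeff k N, if_pos hkN] at hx
        have h3 : ‖a t‖ * r ^ t = ‖(P k).leadingCoeff‖ * G := by
          have hx := g2'
          rwa [Pcoeff k t, if_pos htk] at hx
        linarith
      refine ⟨hteq, ?_⟩
      have hGsplit : G = r ^ N *
          (((P k).roots.filter fun α => ¬ ‖α‖ < r).map fun α => ‖α‖).prod := by
        rw [hGdef]
        conv_lhs => rw [← Multiset.filter_add_not (fun α => ‖α‖ < r) (P k).roots]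
        rw [Multiset.map_add, Multiset.prod_add]
        congr 1
        · have hmc : ((P k).roots.filter fun α => ‖α‖ < r).map (fun α => max r ‖α‖)
              = ((P k).roots.filter fun α => ‖α‖ < r).map (fun _ => r) := by
            apply Multiset.map_congr rfl
            intro α hα
            exact max_eq_left (Multiset.mem_filter.mp hα).2.le
          rw [hmc, Multiset.map_const', Multiset.prod_replicate, ← htdef, hteq]
        · congr 1
          apply Multiset.map_congr rfl
          intro α hα
          exact max_eq_right (not_lt.mp (Multiset.mem_filter.mp hα).2)
      have h3 : ‖a N‖ * r ^ N = ‖(P k).leadingCoeff‖ * G := by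
        have hx := g2'
        rwa [Pcoeff k t, if_pos htk, hteq] at hx
      rw [hGsplit] at h3
      have hrN : (0:ℝ) < r ^ N := by positivity
      have h4 : (‖(P k).leadingCoeff‖ *
          (((P k).roots.filter fun α => ¬ ‖α‖ < r).map fun α => ‖α‖).prod) * r ^ N
          = ‖a N‖ * r ^ N := by
        rw [h3]
        ring
      exact mul_right_cancel₀ hrN.ne' h4
    -- Newton-type step: near any point inside radius `r` there is a root of `P k`
    have hstep : ∀ k, k1 ≤ k → ∀ z : Cp, ‖z‖ < r → ∃ w : Cp,
        ((P k).IsRoot w ∧ ‖w‖ < r) ∧ ‖a N‖ * ‖z - w‖ ^ N ≤ ‖(P k).eval z‖ := by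
      intro k hk z hz
      have hkN : N ≤ k := le_trans (le_max_left _ _) hk
      obtain ⟨hcardN, houter⟩ := hmain k hk
      have hinnne : ((P k).roots.filter fun α => ‖α‖ < r).toFinset.Nonempty := by
        rw [Multiset.toFinset_nonempty]
        intro h0
        rw [h0] at hcardN
        simp only [Multiset.card_zero] at hcardN
        omega
      obtain ⟨w, hwmem, hwmin⟩ := Finset.exists_min_image _ (fun α => ‖z - α‖) hinnne
      rw [Multiset.mem_toFinset] at hwmem
      have hwroot : (P k).IsRoot w :=
        (Polynomial.mem_roots (Pne k hkN)).mp (Multiset.mem_of_mem_filter hwmem)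
      have hwr : ‖w‖ < r := (Multiset.mem_filter.mp hwmem).2
      refine ⟨w, ⟨hwroot, hwr⟩, ?_⟩
      have he : ‖(P k).eval z‖ =
          ‖(P k).leadingCoeff‖ * ((P k).roots.map fun α => ‖z - α‖).prod := by
        conv_lhs => rw [hfact k hk]
        exact norm_eval_prod _ _ _
      rw [he]
      have hsplit2 : ((P k).roots.map fun α => ‖z - α‖).prod =
          (((P k).roots.filter fun α => ‖α‖ < r).map fun α => ‖z - α‖).prod *
          (((P k).roots.filter fun α => ¬ ‖α‖ < r).map fun α => ‖α‖).prod := by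
        conv_lhs => rw [← Multiset.filter_add_not (fun α => ‖α‖ < r) (P k).roots]
        rw [Multiset.map_add, Multiset.prod_add]
        congr 2
        apply Multiset.map_congr rfl
        intro α hα
        exact sub_norm_eq_right (lt_of_lt_of_le hz (not_lt.mp (Multiset.mem_filter.mp hα).2))
      rw [hsplit2]
      have hpowle : ‖z - w‖ ^ N ≤
          (((P k).roots.filter fun α => ‖α‖ < r).map fun α => ‖z - α‖).prod := by
        have hcm : Multiset.card (((P k).roots.filter fun α => ‖α‖ < r).map fun α => ‖z - α‖)
            = N := by rw [Multiset.card_map, hcardN]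
        rw [← hcm]
        refine pow_card_le_prod_of_le _ _ (norm_nonneg _) ?_
        intro x hx
        obtain ⟨α, hα, rfl⟩ := Multiset.mem_map.mp hx
        exact hwmin α (Multiset.mem_toFinset.mpr hα)
      calc ‖a N‖ * ‖z - w‖ ^ N
          ≤ ‖a N‖ * (((P k).roots.filter fun α => ‖α‖ < r).map fun α => ‖z - α‖).prod := by
            exact mul_le_mul_of_nonneg_left hpowle (norm_nonneg _)
        _ = ‖(P k).leadingCoeff‖ *
            ((((P k).roots.filter fun α => ‖α‖ < r).map fun α => ‖z - α‖).prod *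
            (((P k).roots.filter fun α => ¬ ‖α‖ < r).map fun α => ‖α‖).prod) := by
            rw [← houter]
            ring
    -- existence of a root in the annulus `R < ‖w‖ < r`
    have hann : ∀ k, k1 ≤ k → ∃ w : Cp, (P k).IsRoot w ∧ R < ‖w‖ ∧ ‖w‖ < r := by
      intro k hk
      by_contra hcon
      push_neg at hcon
      have hkN : N ≤ k := le_trans (le_max_left _ _) hk
      have hkNR : NR ≤ k := le_trans (le_max_right _ _) hk
      have hinner : ∀ α ∈ (P k).roots, ‖α‖ < r → ‖α‖ ≤ R := by
        intro α hα hαr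
        by_contra h
        push_neg at h
        have hroot : (P k).IsRoot α := (Polynomial.mem_roots (Pne k hkN)).mp hα
        exact absurd hαr (not_lt.mpr (hcon α hroot h))
      have hsR' : ∀ α ∈ (P k).roots, ‖α‖ ≠ R' := by
        intro α hα
        by_cases h : ‖α‖ < r
        · have h2 := hinner α hα h
          intro he
          rw [he] at h2
          linarith
        · push_neg at h
          intro he
          rw [he] at h
          linarith
      obtain ⟨g1, g2⟩ := gauss hR'0 (P k).roots hsR'
      have hfeq : ((P k).roots.filter fun α => ‖α‖ < R') =
          ((P k).roots.filter fun α => ‖α‖ < r) := by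
        apply Multiset.filter_congr
        intro α hα
        exact ⟨fun h => lt_trans h hR'r, fun h => lt_of_le_of_lt (hinner α hα h) hRR'⟩
      have hcN := (hmain k hk).1
      have ht' : Multiset.card ((P k).roots.filter fun α => ‖α‖ < R') = N := by
        rw [hfeq]
        exact hcN
      rw [ht'] at g2
      have hco : ∀ j, ‖(P k).coeff j‖ = ‖(P k).leadingCoeff‖ *
          ‖(((P k).roots.map fun α => Polynomial.X - Polynomial.C α).prod).coeff j‖ := by
        intro j
        conv_lhs => rw [hfact k hk]
        rw [Polynomial.coeff_C_mul, norm_mul]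
      have e1 : ‖(P k).coeff N‖ * R' ^ N =
          ‖(P k).leadingCoeff‖ * ((P k).roots.map fun α => max R' ‖α‖).prod := by
        rw [hco N, mul_assoc, g2]
      have e2 : ‖(P k).coeff NR‖ * R' ^ NR ≤
          ‖(P k).leadingCoeff‖ * ((P k).roots.map fun α => max R' ‖α‖).prod := by
        rw [hco NR, mul_assoc]
        exact mul_le_mul_of_nonneg_left (g1 NR) (norm_nonneg _)
      rw [Pcoeff k N, if_pos hkN] at e1
      rw [Pcoeff k NR, if_pos hkNR] at e2
      rw [← e1] at e2
      linarith
    -- choose the starting index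
    have hRNpos : 0 < ‖a N‖ * R ^ N := by positivity
    obtain ⟨k2, hk2⟩ := (Filter.tendsto_atTop'.mp (hten r hr0.le)) (Set.Iio (‖a N‖ * R ^ N))
      (Iio_mem_nhds hRNpos)
    set k₀ := max k2 k1 with hk₀def
    have hk₀1 : k1 ≤ k₀ := le_max_right _ _
    have hk₀2 : ∀ n, k₀ ≤ n → ‖a n‖ * r ^ n < ‖a N‖ * R ^ N := fun n hn =>
      hk2 n (le_trans (le_max_left _ _) hn)
    -- the recursively chosen sequence of roots
    obtain ⟨w₀, hw₀root, hw₀R, hw₀r⟩ := hann k₀ hk₀1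
    have hstep' : ∀ i : ℕ, ∀ z : Cp, ‖z‖ < r → ∃ w : Cp,
        ((P (k₀ + i + 1)).IsRoot w ∧ ‖w‖ < r) ∧
          ‖a N‖ * ‖z - w‖ ^ N ≤ ‖(P (k₀ + i + 1)).eval z‖ :=
      fun i z hz => hstep (k₀ + i + 1) (le_trans hk₀1 (by omega)) z hz
    let Z : ∀ i : ℕ, {x : Cp // (P (k₀ + i)).IsRoot x ∧ ‖x‖ < r} :=
      fun i => Nat.rec ⟨w₀, hw₀root, hw₀r⟩
        (fun i prev => ⟨(hstep' i prev.1 prev.2.2).choose,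
          (hstep' i prev.1 prev.2.2).choose_spec.1⟩) i
    have hZ0 : (Z 0).1 = w₀ := rfl
    have hZstep : ∀ i, ‖a N‖ * ‖(Z i).1 - (Z (i + 1)).1‖ ^ N ≤
        ‖(P (k₀ + i + 1)).eval (Z i).1‖ :=
      fun i => (hstep' i (Z i).1 (Z i).2.2).choose_spec.2
    -- bound on consecutive moves
    have hmoveb : ∀ i, ‖a N‖ * ‖(Z i).1 - (Z (i + 1)).1‖ ^ N ≤
        ‖a (k₀ + i + 1)‖ * r ^ (k₀ + i + 1) := by
      intro i
      refine le_trans (hZstep i) ?_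
      have hev : (P (k₀ + i + 1)).eval (Z i).1 = a (k₀ + i + 1) * (Z i).1 ^ (k₀ + i + 1) := by
        rw [Peval, Finset.sum_range_succ]
        have hz0 : ∑ j ∈ Finset.range (k₀ + i + 1), a j * (Z i).1 ^ j = 0 := by
          rw [← Peval]
          exact (Z i).2.1
        rw [hz0, zero_add]
      rw [hev, norm_mul, norm_pow]
      exact mul_le_mul_of_nonneg_left (pow_le_pow_left₀ (norm_nonneg _) (Z i).2.2.le _)
        (norm_nonneg _)
    have hmove : ∀ i, ‖(Z i).1 - (Z (i + 1)).1‖ < R := by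
      intro i
      have h1 := hmoveb i
      have h2 := hk₀2 (k₀ + i + 1) (by omega)
      have h3 : ‖a N‖ * ‖(Z i).1 - (Z (i + 1)).1‖ ^ N < ‖a N‖ * R ^ N := lt_of_le_of_lt h1 h2
      have h4 : ‖(Z i).1 - (Z (i + 1)).1‖ ^ N < R ^ N := lt_of_mul_lt_mul_left h3 (norm_nonneg _)
      exact (pow_lt_pow_iff_left₀ (norm_nonneg _) hR0.le (by omega)).mp h4
    have hsmall : ∀ ε : ℝ, 0 < ε → ∃ I : ℕ, ∀ i, I ≤ i →
        ‖(Z i).1 - (Z (i + 1)).1‖ < ε := by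
      intro ε hε
      have hεN : 0 < ‖a N‖ * ε ^ N := by positivity
      obtain ⟨I, hI⟩ := (Filter.tendsto_atTop'.mp (hten r hr0.le)) (Set.Iio (‖a N‖ * ε ^ N))
        (Iio_mem_nhds hεN)
      refine ⟨I, fun i hi => ?_⟩
      have h1 := hmoveb i
      have h2 : ‖a (k₀ + i + 1)‖ * r ^ (k₀ + i + 1) < ‖a N‖ * ε ^ N := hI _ (by omega)
      have h3 : ‖a N‖ * ‖(Z i).1 - (Z (i + 1)).1‖ ^ N < ‖a N‖ * ε ^ N := lt_of_le_of_lt h1 h2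
      have h4 : ‖(Z i).1 - (Z (i + 1)).1‖ ^ N < ε ^ N := lt_of_mul_lt_mul_left h3 (norm_nonneg _)
      exact (pow_lt_pow_iff_left₀ (norm_nonneg _) hε.le (by omega)).mp h4
    have hchain : ∀ (I : ℕ) (ε : ℝ), 0 < ε → (∀ l, I ≤ l → ‖(Z l).1 - (Z (l + 1)).1‖ < ε) →
        ∀ i, I ≤ i → ‖(Z I).1 - (Z i).1‖ < ε := by
      intro I ε hε h i hi
      induction i, hi using Nat.le_induction with
      | base => simpa using hε
      | succ i hIi ih =>
        have hdec : (Z I).1 - (Z (i + 1)).1 = ((Z I).1 - (Z i).1) + ((Z i).1 - (Z (i + 1)).1) := by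
          ring
        rw [hdec]
        exact lt_of_le_of_lt (IsUltrametricDist.norm_add_le_max _ _) (max_lt ih (h i hIi))
    have hcauchy : CauchySeq (fun i => (Z i).1) := by
      rw [Metric.cauchySeq_iff']
      intro ε hε
      obtain ⟨I, hI⟩ := hsmall ε hε
      refine ⟨I, fun n hn => ?_⟩
      rw [dist_eq_norm, norm_sub_rev]
      exact hchain I ε hε hI n hn
    obtain ⟨L, hL⟩ := cauchySeq_tendsto_of_complete hcauchy
    have hLd : ‖w₀ - L‖ ≤ R := by
      have h1 : ∀ i, ‖(Z 0).1 - (Z i).1‖ < R := fun i =>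
        hchain 0 R hR0 (fun l _ => hmove l) i (Nat.zero_le i)
      have h2 : Filter.Tendsto (fun i => ‖(Z 0).1 - (Z i).1‖) Filter.atTop
          (nhds ‖(Z 0).1 - L‖) := (tendsto_const_nhds.sub hL).norm
      have h3 := le_of_tendsto h2 (Filter.Eventually.of_forall fun i => (h1 i).le)
      rwa [hZ0] at h3
    have hLnorm : ‖L‖ = ‖w₀‖ := by
      have hdec : L = w₀ + (L - w₀) := by ring
      rw [hdec]
      refine add_norm_eq_left ?_
      rw [norm_sub_rev]
      exact lt_of_le_of_lt hLd hw₀R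
    have hLR : R < ‖L‖ := hLnorm ▸ hw₀R
    have hLr : ‖L‖ < r := hLnorm ▸ hw₀r
    have hFL : F L = 0 := by
      obtain ⟨B, hB⟩ := (hten r hr0.le).bddAbove_range
      have hBn : ∀ n, ‖a n‖ * r ^ n ≤ B := fun n => hB (Set.mem_range_self n)
      have hB0 : (0:ℝ) ≤ B := le_trans (by positivity) (hBn 0)
      have hLip : ∀ x y : Cp, ‖x‖ ≤ r → ‖y‖ ≤ r →
          ‖F x - F y‖ ≤ (B + 1) / r * ‖x - y‖ := by
        intro x y hx hy
        rw [hF x, hF y, ← Summable.tsum_sub (hconv x) (hconv y)]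
        refine IsUltrametricDist.norm_tsum_le_of_forall_le_of_nonneg (by positivity) ?_
        intro n
        cases n with
        | zero =>
          simp only [pow_zero, mul_one, sub_self, norm_zero]
          positivity
        | succ n =>
          have hd : a (n + 1) * x ^ (n + 1) - a (n + 1) * y ^ (n + 1)
              = a (n + 1) * (x ^ (n + 1) - y ^ (n + 1)) := by ring
          rw [hd, norm_mul]
          have hcoefb : ‖a (n + 1)‖ * r ^ n ≤ (B + 1) / r := by
            rw [le_div_iff₀ hr0]
            calc ‖a (n + 1)‖ * r ^ n * r = ‖a (n + 1)‖ * r ^ (n + 1) := by ring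
              _ ≤ B := hBn (n + 1)
              _ ≤ B + 1 := by linarith
          calc ‖a (n + 1)‖ * ‖x ^ (n + 1) - y ^ (n + 1)‖
              ≤ ‖a (n + 1)‖ * (‖x - y‖ * r ^ (n + 1 - 1)) :=
                mul_le_mul_of_nonneg_left (norm_pow_sub_pow_le x y hx hy (n + 1)) (norm_nonneg _)
            _ = ‖a (n + 1)‖ * r ^ n * ‖x - y‖ := by norm_num; ring
            _ ≤ (B + 1) / r * ‖x - y‖ :=
                mul_le_mul_of_nonneg_right hcoefb (norm_nonneg _)
      have htail : ∀ i : ℕ,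
          F (Z i).1 = ∑' n, a (n + (k₀ + i + 1)) * (Z i).1 ^ (n + (k₀ + i + 1)) := by
        intro i
        have h0 := Summable.sum_add_tsum_nat_add' (f := fun n => a n * (Z i).1 ^ n) (k := k₀ + i + 1)
          ((summable_nat_add_iff (k₀ + i + 1)).mpr (hconv (Z i).1))
        have hroot0 : ∑ j ∈ Finset.range (k₀ + i + 1), a j * (Z i).1 ^ j = 0 := by
          rw [← Peval]
          exact (Z i).2.1
        rw [hF, ← h0, hroot0, zero_add]
      by_contra hne
      have hpos : 0 < ‖F L‖ := norm_pos_iff.mpr hne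
      have hpos2 : 0 < ‖F L‖ / 2 := by linarith
      obtain ⟨K3, hK3⟩ := (Filter.tendsto_atTop'.mp (hten r hr0.le))
        (Set.Iio (‖F L‖ / 2)) (Iio_mem_nhds hpos2)
      have hδ : 0 < ‖F L‖ * r / (B + 1) := by positivity
      obtain ⟨K4, hK4⟩ := (Metric.tendsto_atTop.mp hL) _ hδ
      set i := max K3 K4 with hidef
      have hFZ : ‖F (Z i).1‖ < ‖F L‖ := by
        rw [htail i]
        refine lt_of_le_of_lt (IsUltrametricDist.norm_tsum_le_of_forall_le_of_nonneg hpos2.le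
          fun n => ?_) (by linarith)
        rw [norm_mul, norm_pow]
        calc ‖a (n + (k₀ + i + 1))‖ * ‖(Z i).1‖ ^ (n + (k₀ + i + 1))
            ≤ ‖a (n + (k₀ + i + 1))‖ * r ^ (n + (k₀ + i + 1)) :=
              mul_le_mul_of_nonneg_left (pow_le_pow_left₀ (norm_nonneg _) (Z i).2.2.le _)
                (norm_nonneg _)
          _ ≤ ‖F L‖ / 2 := (hK3 _ (by omega : K3 ≤ n + (k₀ + i + 1))).le
      have hFdiff : ‖F L - F (Z i).1‖ < ‖F L‖ := by
        have h1 := hLip L (Z i).1 hLr.le (Z i).2.2.le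
        have h2 : dist (Z i).1 L < ‖F L‖ * r / (B + 1) := hK4 i (le_max_right _ _)
        have h3 : ‖L - (Z i).1‖ < ‖F L‖ * r / (B + 1) := by
          rw [← dist_eq_norm, dist_comm]
          exact h2
        calc ‖F L - F (Z i).1‖ ≤ (B + 1) / r * ‖L - (Z i).1‖ := h1
          _ < (B + 1) / r * (‖F L‖ * r / (B + 1)) :=
              mul_lt_mul_of_pos_left h3 (by positivity)
          _ = ‖F L‖ := by field_simp
      have hcontra : ‖F L‖ < ‖F L‖ := by
        calc ‖F L‖ = ‖(F L - F (Z i).1) + F (Z i).1‖ := by rw [sub_add_cancel]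
          _ ≤ max ‖F L - F (Z i).1‖ ‖F (Z i).1‖ := IsUltrametricDist.norm_add_le_max _ _
          _ < ‖F L‖ := max_lt hFdiff hFZ
      exact lt_irrefl _ hcontra
    exact absurd (hRz L hFL) (not_lt.mpr hLR.le)
end
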